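/- arXiv:gr-qc/0011050 — 5 statements merged into one kernel-verified Lean document; each statement's English description precedes it below -/
import Mathlib

section
/- Any bijection of ℝⁿ (n ≥ 2) that maps straight lines onto straight lines is an affine map, i.e., of the form x ↦ Ax + a with A an invertible n×n real matrix and a ∈ ℝⁿ. -/
open Function Set

namespace FTAG

variable {V : Type*} [AddCommGroup V] [Module ℝ V]

def line (x v : V) : Set V := {p | ∃ t : ℝ, p = x + t • v}

lemma self_mem_line (x v : V) : x ∈ line x v := ⟨0, by simp⟩

lemma mem_line_iff {x v p : V} : p ∈ line x v ↔ ∃ t : ℝ, p = x + t • v := Iff.rfl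

lemma mem_line_zero_iff {v p : V} : p ∈ line 0 v ↔ ∃ t : ℝ, p = t • v := by
  simp [line]

lemma line_eq_two {x v p q : V} (hp : p ∈ line x v) (hq : q ∈ line x v)
    (hpq : p ≠ q) : line x v = line p (q - p) := by
  obtain ⟨a, rfl⟩ := hp
  obtain ⟨b, rfl⟩ := hq
  have hab : b - a ≠ 0 := by
    intro h
    apply hpq
    have : a = b := by linarith [sub_eq_zero.mp h]
    rw [this]
  ext z
  constructor
  · rintro ⟨t, rfl⟩
    refine ⟨(t - a) / (b - a), ?_⟩
    match_scalars <;> (field_simp; try ring)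
  · rintro ⟨s, rfl⟩
    refine ⟨a + s * (b - a), ?_⟩
    match_scalars <;> ring

def Indep (x y : V) : Prop := ∀ c d : ℝ, c • x + d • y = 0 → c = 0 ∧ d = 0

lemma Indep.symm {x y : V} (h : Indep x y) : Indep y x := by
  intro c d hcd
  have := h d c (by rw [← hcd]; abel)
  exact ⟨this.2, this.1⟩

lemma Indep.left_ne_zero {x y : V} (h : Indep x y) : x ≠ 0 := by
  intro hx
  have := (h 1 0 (by simp [hx])).1
  norm_num at this

lemma Indep.right_ne_zero {x y : V} (h : Indep x y) : y ≠ 0 :=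
  h.symm.left_ne_zero

lemma Indep.add_ne_zero {x y : V} (h : Indep x y) : x + y ≠ 0 := by
  intro hxy
  have := (h 1 1 (by simpa using hxy)).1
  norm_num at this

lemma Indep.coeff {x y : V} (h : Indep x y) {a b c d : ℝ}
    (heq : a • x + b • y = c • x + d • y) : a = c ∧ b = d := by
  have h0 : (a - c) • x + (b - d) • y = 0 := by
    rw [sub_smul, sub_smul]
    rw [← sub_eq_zero] at heq
    rw [← heq]
    abel
  have := h _ _ h0
  constructor <;> linarith [this.1, this.2]

lemma dep_of_rel {x y : V} {c d : ℝ} (h : c • x + d • y = 0) (hd : d ≠ 0) :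
    y = (-c / d) • x := by
  have h1 : d • y = (-c) • x := by
    have h2 : d • y = c • x + d • y - c • x := by abel
    rw [h2, h]
    match_scalars <;> ring
  calc y = d⁻¹ • (d • y) := by rw [smul_smul, inv_mul_cancel₀ hd, one_smul]
    _ = d⁻¹ • ((-c) • x) := by rw [h1]
    _ = (-c / d) • x := by rw [smul_smul]; congr 1; field_simp

variable [NoZeroSMulDivisors ℝ V]

theorem key (g : V → V) (hginj : Function.Injective g) (hg0 : g 0 = 0)
    (hgl : ∀ x v : V, v ≠ 0 → ∃ y w : V, w ≠ 0 ∧ g '' line x v = line y w)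
    (hind : ∀ x : V, x ≠ 0 → ∃ z, Indep x z)
    (u₀ : V) (hu0 : u₀ ≠ 0) :
    (∀ x y, g (x + y) = g x + g y) ∧ (∀ (t : ℝ) (x : V), g (t • x) = t • g x) := by
  -- nonzero preserved
  have hne : ∀ x : V, x ≠ 0 → g x ≠ 0 := by
    intro x hx h
    exact hx (hginj (h.trans hg0.symm))
  -- image of a line is the line through the images of two of its points
  have gA : ∀ x v : V, v ≠ 0 → ∀ p q, p ∈ line x v → q ∈ line x v → p ≠ q →
      g '' line x v = line (g p) (g q - g p) := by
    intro x v hv p q hp hq hpq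
    obtain ⟨y, w, hw, himg⟩ := hgl x v hv
    have hgp : g p ∈ line y w := himg ▸ Set.mem_image_of_mem g hp
    have hgq : g q ∈ line y w := himg ▸ Set.mem_image_of_mem g hq
    rw [himg]
    exact line_eq_two hgp hgq (fun h => hpq (hginj h))
  -- image of a line through the origin
  have span0 : ∀ x : V, x ≠ 0 → g '' line 0 x = line 0 (g x) := by
    intro x hx
    have h0 : (0 : V) ∈ line 0 x := self_mem_line 0 x
    have hxm : x ∈ line 0 x := ⟨1, by simp⟩
    have := gA 0 x hx 0 x h0 hxm (Ne.symm hx)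
    rwa [hg0, sub_zero] at this
  -- scalar images
  have hscal : ∀ x : V, x ≠ 0 → ∀ t : ℝ, ∃ s : ℝ, g (t • x) = s • g x := by
    intro x hx t
    have : g (t • x) ∈ g '' line 0 x := Set.mem_image_of_mem g ⟨t, by simp⟩
    rw [span0 x hx] at this
    obtain ⟨s, hs⟩ := mem_line_zero_iff.mp this
    exact ⟨s, hs⟩
  -- independence preserved
  have gindep : ∀ x y : V, Indep x y → Indep (g x) (g y) := by
    intro x y hxy c d hcd
    by_cases hd : d = 0
    · subst hd
      rw [zero_smul, add_zero] at hcd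
      rcases smul_eq_zero.mp hcd with hc | h
      · exact ⟨hc, rfl⟩
      · exact absurd h (hne x hxy.left_ne_zero)
    · exfalso
      have hy : g y = (-c / d) • g x := dep_of_rel hcd hd
      have : g y ∈ line 0 (g x) := mem_line_zero_iff.mpr ⟨-c / d, hy⟩
      rw [← span0 x hxy.left_ne_zero] at this
      obtain ⟨p, hp, hpy⟩ := this
      obtain ⟨t, rfl⟩ := mem_line_zero_iff.mp hp
      have : t • x = y := hginj hpy
      have h1 := (hxy t (-1) (by rw [this.symm]; match_scalars <;> ring)).2
      norm_num at h1
  -- the plane lemma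
  have planeP : ∀ x y : V, Indep x y → ∀ a b : ℝ, ∃ c d : ℝ,
      g (a • x + b • y) = c • g x + d • g y := by
    intro x y hxy a b
    by_cases ha : a = 0
    · subst ha
      obtain ⟨s, hs⟩ := hscal y hxy.right_ne_zero b
      exact ⟨0, s, by simpa using hs⟩
    by_cases hb : b = 0
    · subst hb
      obtain ⟨s, hs⟩ := hscal x hxy.left_ne_zero a
      exact ⟨s, 0, by simpa using hs⟩
    · -- the line through a•x+b•y with direction a•x - b•y passes through (2a)•x and (2b)•y
      set p := a • x + b • y with hp
      set dvec := a • x - b • y with hd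
      have hdvec : dvec ≠ 0 := by
        intro h
        have : a • x + (-b) • y = 0 := by rw [hd] at h; rw [← h]; match_scalars <;> ring
        exact ha (hxy a (-b) this).1
      have hP1 : (2 * a) • x ∈ line p dvec := ⟨1, by rw [hp, hd]; match_scalars <;> ring⟩
      have hP2 : (2 * b) • y ∈ line p dvec := ⟨-1, by rw [hp, hd]; match_scalars <;> ring⟩
      have hP12 : (2 * a) • x ≠ (2 * b) • y := by
        intro h
        have : (2 * a) • x + (-(2 * b)) • y = 0 := by rw [h]; match_scalars <;> ring
        have := (hxy _ _ this).1
        apply ha; linarith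
      have himg := gA p dvec hdvec _ _ hP1 hP2 hP12
      have hpmem : g p ∈ line (g ((2 * a) • x)) (g ((2 * b) • y) - g ((2 * a) • x)) := by
        rw [← himg]
        exact Set.mem_image_of_mem g (self_mem_line p dvec)
      obtain ⟨t, ht⟩ := mem_line_iff.mp hpmem
      obtain ⟨s₁, hs₁⟩ := hscal x hxy.left_ne_zero (2 * a)
      obtain ⟨s₂, hs₂⟩ := hscal y hxy.right_ne_zero (2 * b)
      refine ⟨s₁ - t * s₁, t * s₂, ?_⟩
      rw [ht, hs₁, hs₂]
      match_scalars <;> ring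
  -- image of the line x + t y for independent x, y
  have lineQ : ∀ x y : V, Indep x y → g '' line x y = line (g x) (g y) := by
    intro x y hxy
    obtain ⟨u, w, hw, himg⟩ := hgl x y hxy.right_ne_zero
    have hgxy := gindep x y hxy
    -- coordinates of points in the image
    have coords : ∀ z ∈ line u w, ∃ c d : ℝ, z = c • g x + d • g y := by
      intro z hz
      rw [← himg] at hz
      obtain ⟨p, hp, rfl⟩ := hz
      obtain ⟨t, rfl⟩ := mem_line_iff.mp hp
      obtain ⟨c, d, hcd⟩ := planeP x y hxy 1 t
      exact ⟨c, d, by rw [← hcd]; congr 1; match_scalars <;> ring⟩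
    -- the image is disjoint from the line ℝ • g y
    have disj : ∀ z ∈ line u w, z ∉ line 0 (g y) := by
      intro z hz hz'
      rw [← himg] at hz
      obtain ⟨p, hp, rfl⟩ := hz
      obtain ⟨t, rfl⟩ := mem_line_iff.mp hp
      rw [← span0 y hxy.right_ne_zero] at hz'
      obtain ⟨q, hq, hqe⟩ := hz'
      obtain ⟨t', rfl⟩ := mem_line_zero_iff.mp hq
      have : t' • y = x + t • y := hginj hqe
      have h0 : (1 : ℝ) • x + (t - t') • y = 0 := by
        rw [← sub_eq_zero] at this
        rw [← neg_eq_zero, ← this]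
        match_scalars <;> ring
      have := (hxy _ _ h0).1
      norm_num at this
    obtain ⟨c₀, d₀, hu⟩ := coords u (self_mem_line u w)
    obtain ⟨c₁, d₁, huw⟩ := coords (u + w) ⟨1, by simp⟩
    have hc01 : c₀ = c₁ := by
      by_contra hne01
      have hmem : u + (c₀ / (c₀ - c₁)) • w ∈ line u w := ⟨c₀ / (c₀ - c₁), rfl⟩
      apply disj _ hmem
      rw [mem_line_zero_iff]
      refine ⟨d₀ + (c₀ / (c₀ - c₁)) * (d₁ - d₀), ?_⟩
      have hwv : w = (c₁ - c₀) • g x + (d₁ - d₀) • g y := by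
        have : u + w - u = (c₁ • g x + d₁ • g y) - (c₀ • g x + d₀ • g y) := by
          rw [← hu, ← huw]
        rw [add_sub_cancel_left] at this
        rw [this]; match_scalars <;> ring
      rw [hu, hwv]
      have hsub : c₀ - c₁ ≠ 0 := sub_ne_zero.mpr hne01
      match_scalars <;> (field_simp; try ring)
    -- so w is proportional to g y
    have hwv : w = (d₁ - d₀) • g y := by
      have : u + w - u = (c₁ • g x + d₁ • g y) - (c₀ • g x + d₀ • g y) := by
        rw [← hu, ← huw]
      rw [add_sub_cancel_left] at this
      rw [this, ← hc01]; match_scalars <;> ring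
    have he : d₁ - d₀ ≠ 0 := by
      intro h
      rw [h, zero_smul] at hwv
      exact hw hwv
    -- g x lies on the image line
    have hgx : g x ∈ line u w := by
      rw [← himg]
      exact Set.mem_image_of_mem g ⟨0, by simp⟩
    obtain ⟨t₂, ht₂⟩ := mem_line_iff.mp hgx
    have hgxc : (1 : ℝ) • g x + (0 : ℝ) • g y = c₀ • g x + (d₀ + t₂ * (d₁ - d₀)) • g y := by
      have h' : u + t₂ • w = c₀ • g x + (d₀ + t₂ * (d₁ - d₀)) • g y := by
        rw [hu, hwv]; match_scalars <;> ring
      rw [← h', ← ht₂]; match_scalars <;> ring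
    obtain ⟨hc0one, hd0t⟩ := hgxy.coeff hgxc
    rw [himg]
    ext z
    constructor
    · rintro ⟨t, rfl⟩
      refine ⟨d₀ + t * (d₁ - d₀), ?_⟩
      rw [hu, hwv, ← hc0one]
      match_scalars <;> ring
    · rintro ⟨s, rfl⟩
      refine ⟨(s - d₀) / (d₁ - d₀), ?_⟩
      rw [hu, hwv, ← hc0one]
      match_scalars <;> (field_simp; try ring)
  -- additivity on independent pairs
  have addIndep : ∀ x y : V, Indep x y → g (x + y) = g x + g y := by
    intro x y hxy
    have h1 : g (x + y) ∈ line (g x) (g y) := by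
      rw [← lineQ x y hxy]
      exact Set.mem_image_of_mem g ⟨1, by simp⟩
    have h2 : g (x + y) ∈ line (g y) (g x) := by
      rw [← lineQ y x hxy.symm]
      exact Set.mem_image_of_mem g ⟨1, by rw [add_comm]; simp⟩
    obtain ⟨t, ht⟩ := mem_line_iff.mp h1
    obtain ⟨s, hs⟩ := mem_line_iff.mp h2
    have heq : (1 : ℝ) • g x + t • g y = s • g x + (1 : ℝ) • g y := by
      rw [← sub_eq_zero]
      have : g x + t • g y = g y + s • g x := by rw [← ht, ← hs]
      rw [← sub_eq_zero] at this
      rw [← this]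
      match_scalars <;> ring
    have := (gindep x y hxy).coeff heq
    rw [ht, this.2, one_smul]
  -- g is odd
  have gneg : ∀ x : V, g (-x) = -g x := by
    intro x
    by_cases hx : x = 0
    · simp [hx, hg0]
    · obtain ⟨z, hz⟩ := hind x hx
      have hzx := hz.symm
      have h1 : Indep (z + x) (-x) := by
        intro c d h
        have : c • z + (c - d) • x = 0 := by
          rw [← h]; match_scalars <;> ring
        obtain ⟨hc, hcd⟩ := hzx c (c - d) this
        exact ⟨hc, by linarith⟩
      have h2 : g z = g (z + x) + g (-x) := by
        conv_lhs => rw [show z = (z + x) + (-x) by abel]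
        exact addIndep _ _ h1
      rw [addIndep z x hzx] at h2
      have h5 : g z - (g z + g x + g (-x)) = 0 := by rw [← h2]; abel
      have h4 : g (-x) - (- g x) = -(g z - (g z + g x + g (-x))) := by abel
      rw [h5, neg_zero] at h4
      exact sub_eq_zero.mp h4
  -- full additivity
  have addfull : ∀ x y : V, g (x + y) = g x + g y := by
    intro x y
    by_cases hxy : Indep x y
    · exact addIndep x y hxy
    by_cases hx : x = 0
    · simp [hx, hg0]
    by_cases hy : y = 0
    · simp [hy, hg0]
    -- y = e • x with e ≠ 0
    have hex : ∃ e : ℝ, e ≠ 0 ∧ y = e • x := by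
      rw [Indep] at hxy
      push_neg at hxy
      obtain ⟨c, d, hcd, hne'⟩ := hxy
      by_cases hd : d = 0
      · exfalso
        subst hd
        rw [zero_smul, add_zero] at hcd
        rcases smul_eq_zero.mp hcd with hc | h
        · exact (hne' hc) rfl
        · exact hx h
      · refine ⟨-c / d, ?_, dep_of_rel hcd hd⟩
        intro h
        have hc : c = 0 := by
          field_simp at h
          linarith
        subst hc
        rw [zero_smul, zero_add] at hcd
        rcases smul_eq_zero.mp hcd with h | h
        · exact hd h
        · exact hy h
    obtain ⟨e, he, rfl⟩ := hex
    by_cases hem : e = -1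
    · subst hem
      have hxx : x + (-1 : ℝ) • x = 0 := by match_scalars <;> ring
      rw [hxx, hg0, neg_one_smul, gneg]
      abel
    · obtain ⟨z, hxz⟩ := hind x hx
      have h1 : Indep (x + z) (e • x - z) := by
        intro c d h
        have : (c + d * e) • x + (c - d) • z = 0 := by
          rw [← h]; match_scalars <;> ring
        obtain ⟨hc, hcd⟩ := hxz _ _ this
        have hcd' : c = d := by linarith
        subst hcd'
        have : c * (1 + e) = 0 := by linarith
        rcases mul_eq_zero.mp this with h' | h'
        · exact ⟨h', h'⟩
        · exact absurd (by linarith : e = -1) hem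
      have h2 : Indep (e • x) (-z) := by
        intro c d h
        have : (c * e) • x + (-d) • z = 0 := by
          rw [← h]; match_scalars <;> ring
        obtain ⟨hc, hcd⟩ := hxz _ _ this
        constructor
        · rcases mul_eq_zero.mp hc with h' | h'
          · exact h'
          · exact absurd h' he
        · linarith
      have hsplit : x + e • x = (x + z) + (e • x - z) := by abel
      rw [hsplit, addIndep _ _ h1, addIndep x z hxz]
      have h3 : e • x - z = e • x + (-z) := by abel
      rw [h3, addIndep _ _ h2, gneg]
      abel
  -- the scaling function
  have scalEq : ∀ x z : V, Indep x z → ∀ (t s s' : ℝ),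
      g (t • x) = s • g x → g (t • z) = s' • g z → s = s' := by
    intro x z hxz t s s' hs hs'
    obtain ⟨s₃, hs₃⟩ := hscal (x + z) hxz.add_ne_zero t
    have hdist : t • (x + z) = t • x + t • z := smul_add t x z
    rw [hdist, addfull, hs, hs'] at hs₃
    rw [addfull x z] at hs₃
    have heq : s • g x + s' • g z = s₃ • g x + s₃ • g z := by
      rw [hs₃, smul_add]
    obtain ⟨h1, h2⟩ := (gindep x z hxz).coeff heq
    rw [h1, h2]
  have scalAll : ∀ x : V, x ≠ 0 → ∀ (t s s' : ℝ),
      g (t • x) = s • g x → g (t • u₀) = s' • g u₀ → s = s' := by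
    intro x hx t s s' hs hs'
    by_cases hxu : Indep x u₀
    · exact scalEq x u₀ hxu t s s' hs hs'
    · -- x = e • u₀; pick z independent of u₀, hence of x
      have hex : ∃ e : ℝ, e ≠ 0 ∧ x = e • u₀ := by
        rw [Indep] at hxu
        push_neg at hxu
        obtain ⟨c, d, hcd, hne'⟩ := hxu
        by_cases hc : c = 0
        · exfalso
          subst hc
          rw [zero_smul, zero_add] at hcd
          rcases smul_eq_zero.mp hcd with h | h
          · exact (hne' rfl) h
          · exact hu0 h
        · have hcd' : d • u₀ + c • x = 0 := by rw [← hcd]; abel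
          refine ⟨-d / c, ?_, dep_of_rel hcd' hc⟩
          intro h0
          have hdz : d = 0 := by field_simp at h0; linarith
          subst hdz
          rw [zero_smul, zero_add] at hcd'
          rcases smul_eq_zero.mp hcd' with h | h
          · exact hc h
          · exact hx h
      obtain ⟨e, he, hxe⟩ := hex
      obtain ⟨z, hz⟩ := hind u₀ hu0
      have hxz : Indep x z := by
        intro c d h
        rw [hxe] at h
        have : (c * e) • u₀ + d • z = 0 := by rw [← h]; match_scalars <;> ring
        obtain ⟨hc, hd⟩ := hz _ _ this
        refine ⟨?_, hd⟩
        rcases mul_eq_zero.mp hc with h' | h'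
        · exact h'
        · exact absurd h' he
      obtain ⟨sz, hsz⟩ := hscal z hz.right_ne_zero t
      have e1 := scalEq x z hxz t s sz hs hsz
      have e2 := scalEq u₀ z hz t s' sz hs' hsz
      rw [e1, e2]
  -- the ring endomorphism
  have hgu0 := hne u₀ hu0
  choose σ hσ using hscal u₀ hu0
  have hσall : ∀ (t : ℝ) (x : V), g (t • x) = σ t • g x := by
    intro t x
    by_cases hx : x = 0
    · simp [hx, hg0]
    · obtain ⟨s, hs⟩ := hscal x hx t
      rw [hs, scalAll x hx t s (σ t) hs (hσ t)]
  have σ_inj : ∀ s t : ℝ, σ s • g u₀ = σ t • g u₀ → σ s = σ t := by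
    intro s t h
    exact smul_left_injective ℝ hgu0 h
  have σ_zero : σ 0 = 0 := by
    have : σ 0 • g u₀ = (0 : ℝ) • g u₀ := by
      rw [← hσ 0, zero_smul, hg0, zero_smul]
    exact smul_left_injective ℝ hgu0 this
  have σ_one : σ 1 = 1 := by
    have : σ 1 • g u₀ = (1 : ℝ) • g u₀ := by
      rw [← hσ 1, one_smul, one_smul]
    exact smul_left_injective ℝ hgu0 this
  have σ_add : ∀ s t : ℝ, σ (s + t) = σ s + σ t := by
    intro s t
    have : σ (s + t) • g u₀ = (σ s + σ t) • g u₀ := by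
      calc σ (s + t) • g u₀ = g ((s + t) • u₀) := (hσ _).symm
        _ = g (s • u₀ + t • u₀) := by rw [add_smul]
        _ = g (s • u₀) + g (t • u₀) := addfull _ _
        _ = σ s • g u₀ + σ t • g u₀ := by rw [hσ, hσ]
        _ = (σ s + σ t) • g u₀ := (add_smul _ _ _).symm
    exact smul_left_injective ℝ hgu0 this
  have σ_mul : ∀ s t : ℝ, σ (s * t) = σ s * σ t := by
    intro s t
    have : σ (s * t) • g u₀ = (σ s * σ t) • g u₀ := by
      calc σ (s * t) • g u₀ = g ((s * t) • u₀) := (hσ _).symm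
        _ = g (s • (t • u₀)) := by rw [smul_smul]
        _ = σ s • g (t • u₀) := hσall s _
        _ = σ s • (σ t • g u₀) := by rw [hσ]
        _ = (σ s * σ t) • g u₀ := smul_smul _ _ _
    exact smul_left_injective ℝ hgu0 this
  have σ_id : ∀ t : ℝ, σ t = t := by
    intro t
    let σ' : ℝ →+* ℝ :=
      { toFun := σ
        map_one' := σ_one
        map_mul' := σ_mul
        map_zero' := σ_zero
        map_add' := σ_add }
    have : σ' = RingHom.id ℝ := Subsingleton.elim _ _
    exact DFunLike.congr_fun this t
  refine ⟨addfull, fun t x => ?_⟩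
  rw [hσall t x, σ_id]


lemma exists_indep {n : ℕ} (hn : 2 ≤ n) (x : Fin n → ℝ) (hx : x ≠ 0) :
    ∃ z : Fin n → ℝ, Indep x z := by
  obtain ⟨i, hi⟩ := Function.ne_iff.mp hx
  simp only [Pi.zero_apply] at hi
  obtain ⟨j, hj⟩ : ∃ j : Fin n, j ≠ i := by
    rcases Nat.lt_or_ge i.val 1 with h | h
    · exact ⟨⟨1, by omega⟩, by simp [Fin.ext_iff]; omega⟩
    · exact ⟨⟨0, by omega⟩, by simp [Fin.ext_iff]; omega⟩
  refine ⟨Pi.single j 1, fun c d h => ?_⟩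
  have hci := congrFun h i
  simp only [Pi.add_apply, Pi.smul_apply, smul_eq_mul, Pi.zero_apply,
    Pi.single_eq_of_ne hj.symm, mul_zero, add_zero] at hci
  have hc : c = 0 := by
    rcases mul_eq_zero.mp hci with h' | h'
    · exact h'
    · exact absurd h' hi
  subst hc
  have hdj := congrFun h j
  simp only [Pi.add_apply, Pi.smul_apply, smul_eq_mul, Pi.zero_apply, zero_mul,
    Pi.single_eq_same, mul_one, zero_add] at hdj
  exact ⟨rfl, hdj⟩

lemma translate_line (a y w : V) :
    (fun z => z - a) '' line y w = line (y - a) w := by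
  ext z
  constructor
  · rintro ⟨p, ⟨t, rfl⟩, rfl⟩
    exact ⟨t, by abel⟩
  · rintro ⟨t, rfl⟩
    exact ⟨y + t • w, ⟨t, rfl⟩, by abel⟩

end FTAG

/-- Fundamental theorem of real affine geometry: any bijection of `ℝⁿ` (`n ≥ 2`)
mapping straight lines onto straight lines is an affine map `x ↦ A x + a` with
`A` an invertible linear map. -/
theorem bijection_mapping_lines_to_lines_is_affine
    (n : ℕ) (hn : 2 ≤ n) (f : (Fin n → ℝ) ≃ (Fin n → ℝ))
    (hlines : ∀ (x v : Fin n → ℝ), v ≠ 0 → ∃ (y w : Fin n → ℝ), w ≠ 0 ∧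
        (⇑f) '' {p | ∃ t : ℝ, p = x + t • v} = {p | ∃ t : ℝ, p = y + t • w}) :
    ∃ (A : (Fin n → ℝ) →ₗ[ℝ] (Fin n → ℝ)) (a : Fin n → ℝ),
      Function.Bijective A ∧ ∀ x, f x = A x + a := by
  classical
  set gE : (Fin n → ℝ) ≃ (Fin n → ℝ) := f.trans (Equiv.subRight (f 0)) with hgE
  have hgdef : ∀ x, gE x = f x - f 0 := fun x => rfl
  have hg0 : gE 0 = 0 := by simp [hgdef]
  have hgl : ∀ x v : Fin n → ℝ, v ≠ 0 →
      ∃ y w : Fin n → ℝ, w ≠ 0 ∧ (⇑gE) '' FTAG.line x v = FTAG.line y w := by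
    intro x v hv
    obtain ⟨y, w, hw, him⟩ := hlines x v hv
    refine ⟨y - f 0, w, hw, ?_⟩
    have h1 : (⇑gE) '' FTAG.line x v = (fun z => z - f 0) '' ((⇑f) '' FTAG.line x v) := by
      rw [← Set.image_comp]
      rfl
    rw [h1]
    have h2 : (⇑f) '' FTAG.line x v = FTAG.line y w := him
    rw [h2, FTAG.translate_line]
  have hind : ∀ x : Fin n → ℝ, x ≠ 0 → ∃ z, FTAG.Indep x z :=
    fun x hx => FTAG.exists_indep hn x hx
  have hu0 : (Pi.single (⟨0, by omega⟩ : Fin n) 1 : Fin n → ℝ) ≠ 0 := by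
    intro h
    have := congrFun h ⟨0, by omega⟩
    simp at this
  obtain ⟨hadd, hsmul⟩ := FTAG.key (⇑gE) gE.injective hg0 hgl hind _ hu0
  refine ⟨{ toFun := ⇑gE, map_add' := hadd, map_smul' := hsmul }, f 0, gE.bijective, ?_⟩
  intro x
  show f x = gE x + f 0
  rw [hgdef]
  abel
end

section
/- Let S be a non-trivial IGal-invariant equivalence relation on ℝ⁴. Then every equivalence class is a union of hyperplanes Σ_t = {(t,x) | x ∈ ℝ³}; that is, if S(p,q) for two distinct points p,q, then the entire hyperplane of constant time through p is contained in [p]. -/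
open Matrix


/-- The action of an inhomogeneous Galilei group element `(R, v, a, b)` on
spacetime `ℝ × ℝ³`: `(t, x) ↦ (t + b, R x + t v + a)`. -/
def galAct (R : Matrix (Fin 3) (Fin 3) ℝ) (v a : Fin 3 → ℝ) (b : ℝ) :
    ℝ × (Fin 3 → ℝ) → ℝ × (Fin 3 → ℝ) :=
  fun p => (p.1 + b, R.mulVec p.2 + p.1 • v + a)

/-- For a non-trivial `IGal`-invariant equivalence relation on spacetime, every
equivalence class is a union of constant-time hyperplanes: if `S p q` for
distinct `p, q`, then the whole hyperplane of constant time through `p` is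
contained in `[p]`. -/
theorem IGal_invariant_class_contains_hyperplane
    (S : Setoid (ℝ × (Fin 3 → ℝ)))
    (hinv : ∀ (R : Matrix (Fin 3) (Fin 3) ℝ), R ∈ Matrix.specialOrthogonalGroup (Fin 3) ℝ →
      ∀ (v a : Fin 3 → ℝ) (b : ℝ) (p q : ℝ × (Fin 3 → ℝ)),
        S.r p q ↔ S.r (galAct R v a b p) (galAct R v a b q))
    (hne : ∃ p q, p ≠ q ∧ S.r p q) (hnt : ∃ p q, ¬ S.r p q) :
    ∀ p q : ℝ × (Fin 3 → ℝ), p ≠ q → S.r p q →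
      ∀ r : ℝ × (Fin 3 → ℝ), r.1 = p.1 → S.r p r := by
  intro p q hpq hSpq r hr
  -- translation invariance
  have htrans : ∀ (c pp qq : ℝ × (Fin 3 → ℝ)), S.r pp qq ↔ S.r (pp + c) (qq + c) := by
    intro c pp qq
    have hg : ∀ x : ℝ × (Fin 3 → ℝ), galAct 1 0 c.2 c.1 x = x + c := by
      intro x; simp [galAct, Matrix.one_mulVec, Prod.ext_iff]
    have h := hinv 1 (one_mem _) 0 c.2 c.1 pp qq
    rwa [hg, hg] at h
  have hT_iff : ∀ pp qq : ℝ × (Fin 3 → ℝ), S.r pp qq ↔ S.r 0 (qq - pp) := by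
    intro pp qq
    have h := htrans (-pp) pp qq
    rwa [add_neg_cancel, ← sub_eq_add_neg] at h
  have hTadd : ∀ d e : ℝ × (Fin 3 → ℝ), S.r 0 d → S.r 0 e → S.r 0 (d + e) := by
    intro d e hd he
    have h := (htrans d 0 e).mp he
    rw [zero_add, add_comm] at h
    exact S.iseqv.trans hd h
  have hTneg : ∀ d : ℝ × (Fin 3 → ℝ), S.r 0 d → S.r 0 (-d) := by
    intro d hd
    have h := (htrans (-d) 0 d).mp hd
    rw [zero_add, add_neg_cancel] at h
    exact S.iseqv.symm h
  -- boosts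
  have hboost : ∀ (t : ℝ) (x v : Fin 3 → ℝ), S.r 0 (t, x) → S.r 0 (t, x + t • v) := by
    intro t x v h
    have hg := hinv 1 (one_mem _) v 0 0 (0 : ℝ × (Fin 3 → ℝ)) (t, x)
    simp only [galAct, Matrix.one_mulVec] at hg
    norm_num at hg
    exact hg.mp h
  -- rotations
  have hrot : ∀ R : Matrix (Fin 3) (Fin 3) ℝ, R ∈ Matrix.specialOrthogonalGroup (Fin 3) ℝ →
      ∀ x : Fin 3 → ℝ, S.r 0 ((0 : ℝ), x) → S.r 0 ((0 : ℝ), R.mulVec x) := by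
    intro R hR x h
    have hg := hinv R hR 0 0 0 (0 : ℝ × (Fin 3 → ℝ)) ((0 : ℝ), x)
    simp only [galAct, Matrix.mulVec_zero] at hg
    norm_num at hg
    exact hg.mp h
  -- the difference
  set d : ℝ × (Fin 3 → ℝ) := q - p with hd_def
  have hd : S.r 0 d := (hT_iff p q).mp hSpq
  have hdne : d ≠ 0 := sub_ne_zero.mpr (Ne.symm hpq)
  -- main claim
  have key : ∀ y : Fin 3 → ℝ, S.r 0 ((0 : ℝ), y) := by
    by_cases hd1 : d.1 = 0
    · -- spatial case
      have hd2 : d.2 ≠ 0 := by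
        intro h2
        exact hdne (Prod.ext hd1 h2)
      have hde : S.r 0 ((0 : ℝ), d.2) := by
        have : d = ((0 : ℝ), d.2) := Prod.ext hd1 rfl
        rwa [this] at hd
      set e : Fin 3 → ℝ := d.2 with he_def
      have hdotnn : ∀ f : Fin 3 → ℝ, 0 ≤ f ⬝ᵥ f :=
        fun f => Finset.sum_nonneg fun i _ => mul_self_nonneg _
      have hdotne : ∀ f : Fin 3 → ℝ, f ≠ 0 → f ⬝ᵥ f ≠ 0 := by
        intro f hf h0
        apply hf
        funext i
        have := (Finset.sum_eq_zero_iff_of_nonneg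
          (fun i _ => mul_self_nonneg (f i))).mp h0 i (Finset.mem_univ i)
        exact mul_self_eq_zero.mp this
      -- sphere lemma
      have hsphere : ∀ u : Fin 3 → ℝ, u ⬝ᵥ u = e ⬝ᵥ e → S.r 0 ((0 : ℝ), u) := by
        intro u hu
        by_cases hue : u = e
        · rwa [hue]
        set c : Fin 3 → ℝ := e - u with hc_def
        have hcne : c ≠ 0 := sub_ne_zero.mpr fun h => hue h.symm
        have hcc : c ⬝ᵥ c ≠ 0 := hdotne c hcne
        set s : ℝ := 2 / (c ⬝ᵥ c) with hs_def
        set K : Matrix (Fin 3) (Fin 3) ℝ := Matrix.vecMulVec c c with hK_def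
        set M : Matrix (Fin 3) (Fin 3) ℝ := s • K - 1 with hM_def
        have hKK : K * K = (c ⬝ᵥ c) • K := by
          ext i j
          simp only [hK_def, Matrix.mul_apply, Matrix.vecMulVec_apply, Matrix.smul_apply,
            dotProduct, smul_eq_mul, Finset.sum_mul, Finset.mul_sum]
          exact Finset.sum_congr rfl fun k _ => by ring
        have hKmul : K.mulVec e = (c ⬝ᵥ e) • c := by
          funext i
          simp only [hK_def, Matrix.mulVec, Matrix.vecMulVec_apply, dotProduct,
            Pi.smul_apply, smul_eq_mul, Finset.sum_mul]
          exact Finset.sum_congr rfl fun k _ => by ring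
        have hce : c ⬝ᵥ c = 2 * (c ⬝ᵥ e) := by
          simp only [hc_def, sub_dotProduct, dotProduct_sub]
          rw [dotProduct_comm u e] at *
          nlinarith [hu, dotProduct_comm e u]
        have hMe : M.mulVec e = -u := by
          rw [hM_def, Matrix.sub_mulVec, Matrix.smul_mulVec, hKmul, Matrix.one_mulVec,
            smul_smul]
          have : s * (c ⬝ᵥ e) = 1 := by
            rw [hs_def, div_mul_eq_mul_div, ← hce, div_self hcc]
          rw [this, one_smul, hc_def]
          funext i; simp
        have hMT : Mᵀ = M := by
          rw [hM_def]
          ext i j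
          simp [hK_def, Matrix.vecMulVec_apply, Matrix.one_apply, mul_comm, eq_comm]
        have hMM : M * M = 1 := by
          have expand : M * M = (s * s) • (K * K) - s • K - s • K + 1 := by
            rw [hM_def]
            rw [Matrix.sub_mul, Matrix.mul_sub, Matrix.mul_sub, Matrix.smul_mul,
              Matrix.mul_smul, Matrix.mul_one, Matrix.one_mul, Matrix.mul_one, smul_smul]
            abel
          rw [expand, hKK, smul_smul]
          have hs2 : s * s * (c ⬝ᵥ c) = s + s := by
            have hscc : s * (c ⬝ᵥ c) = 2 := div_mul_cancel₀ 2 hcc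
            rw [mul_assoc, hscc]; ring
          rw [hs2, add_smul]
          abel
        have hMso : M ∈ Matrix.specialOrthogonalGroup (Fin 3) ℝ := by
          rw [Matrix.mem_specialOrthogonalGroup_iff]
          constructor
          · rw [Matrix.mem_orthogonalGroup_iff]
            rw [hMT, hMM]
          · have hMneg : M = -(1 - Matrix.vecMulVec (s • c) c) := by
              rw [hM_def]
              have : s • K = Matrix.vecMulVec (s • c) c := by
                ext i j; simp [hK_def, Matrix.vecMulVec_apply]; ring
              rw [this, neg_sub]
            have hdet1 : (1 - Matrix.vecMulVec (s • c) c).det = 1 - s * (c ⬝ᵥ c) := by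
              have h : (1 - Matrix.vecMulVec (s • c) c)
                  = 1 + Matrix.replicateCol Unit (-(s • c)) * Matrix.replicateRow Unit c := by
                rw [← Matrix.vecMulVec_eq (ι := Unit)]
                ext i j
                simp [Matrix.vecMulVec_apply]
                ring
              rw [h, Matrix.det_one_add_replicateCol_mul_replicateRow]
              simp [dotProduct_neg, dotProduct_smul]
              ring
            rw [hMneg, Matrix.det_neg, hdet1]
            have : s * (c ⬝ᵥ c) = 2 := div_mul_cancel₀ 2 hcc
            rw [this]
            norm_num
        have h1 : S.r 0 ((0 : ℝ), M.mulVec e) := hrot M hMso e hde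
        rw [hMe] at h1
        have h2 := hTneg _ h1
        have : -((0 : ℝ), -u) = ((0 : ℝ), u) := by simp [Prod.ext_iff]
        rwa [this] at h2
      -- bounded coordinate moves
      have hepos : 0 < e ⬝ᵥ e := lt_of_le_of_ne (hdotnn e) (Ne.symm (hdotne e hd2))
      have hsingle : ∀ (i j : Fin 3), i ≠ j → ∀ t : ℝ, t ^ 2 ≤ 4 * (e ⬝ᵥ e) →
          S.r 0 ((0 : ℝ), (Pi.single i t : Fin 3 → ℝ)) := by
        intro i j hij t ht
        set β : ℝ := Real.sqrt (e ⬝ᵥ e - (t / 2) ^ 2) with hβ_def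
        have hnn : 0 ≤ e ⬝ᵥ e - (t / 2) ^ 2 := by nlinarith
        have hβ2 : β ^ 2 = e ⬝ᵥ e - (t / 2) ^ 2 := Real.sq_sqrt hnn
        have hdot : ∀ γ : ℝ, γ ^ 2 = β ^ 2 →
            ((Pi.single i (t / 2) + Pi.single j γ : Fin 3 → ℝ)) ⬝ᵥ
              ((Pi.single i (t / 2) + Pi.single j γ : Fin 3 → ℝ)) = e ⬝ᵥ e := by
          intro γ hγ
          simp only [add_dotProduct, single_dotProduct, Pi.add_apply]
          rw [Pi.single_eq_same, Pi.single_eq_of_ne hij, Pi.single_eq_of_ne (Ne.symm hij),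
            Pi.single_eq_same]
          nlinarith [hγ, hβ2]
        have hu1 := hsphere _ (hdot β rfl)
        have hu2 := hsphere _ (hdot (-β) (by ring))
        have h3 := hTadd _ _ hu1 hu2
        have heq : ((0 : ℝ), (Pi.single i (t / 2) + Pi.single j β : Fin 3 → ℝ))
            + ((0 : ℝ), (Pi.single i (t / 2) + Pi.single j (-β) : Fin 3 → ℝ))
            = ((0 : ℝ), (Pi.single i t : Fin 3 → ℝ)) := by
          simp only [Prod.mk_add_mk, Prod.mk.injEq]
          refine ⟨by ring, ?_⟩
          rw [add_add_add_comm, ← Pi.single_add, ← Pi.single_add, add_neg_cancel,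
            Pi.single_zero, add_zero, add_halves]
        rwa [heq] at h3
      have hnsmul : ∀ (z : ℝ × (Fin 3 → ℝ)), S.r 0 z → ∀ n : ℕ, S.r 0 (n • z) := by
        intro z hz n
        induction n with
        | zero => simpa using S.iseqv.refl 0
        | succ m ih =>
          have h := hTadd _ _ ih hz
          rwa [← succ_nsmul] at h
      have hsingle' : ∀ (i j : Fin 3), i ≠ j → ∀ t : ℝ,
          S.r 0 ((0 : ℝ), (Pi.single i t : Fin 3 → ℝ)) := by
        intro i j hij t
        obtain ⟨n, hn⟩ := exists_nat_ge (t ^ 2 / (4 * (e ⬝ᵥ e)))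
        set N : ℝ := (n : ℝ) + 1 with hN
        have hN0 : (0 : ℝ) < N := by positivity
        have h1 : t ^ 2 ≤ (n : ℝ) * (4 * (e ⬝ᵥ e)) :=
          (div_le_iff₀ (by positivity)).mp hn
        have hbound : (t / N) ^ 2 ≤ 4 * (e ⬝ᵥ e) := by
          rw [div_pow, div_le_iff₀ (by positivity)]
          have h2 : (n : ℝ) ≤ N ^ 2 := by rw [hN]; nlinarith [sq_nonneg ((n : ℝ))]
          nlinarith [h1, hepos, h2]
        have h := hsingle i j hij (t / N) hbound
        have h2 := hnsmul _ h (n + 1)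
        have heq : (n + 1) • ((0 : ℝ), (Pi.single i (t / N) : Fin 3 → ℝ))
            = ((0 : ℝ), (Pi.single i t : Fin 3 → ℝ)) := by
          rw [Prod.smul_mk]
          refine Prod.ext (by simp) ?_
          funext k
          simp only [Pi.smul_apply, Pi.single_apply, smul_ite, smul_zero, nsmul_eq_mul]
          split
          · push_cast
            rw [hN] at *
            field_simp
          · rfl
        rwa [heq] at h2
      intro y
      have ha := hsingle' 0 1 (by decide) (y 0)
      have hb := hsingle' 1 0 (by decide) (y 1)
      have hc3 := hsingle' 2 0 (by decide) (y 2)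
      have hA := hTadd _ _ (hTadd _ _ ha hb) hc3
      have heq : (((0 : ℝ), (Pi.single 0 (y 0) : Fin 3 → ℝ))
          + ((0 : ℝ), (Pi.single 1 (y 1) : Fin 3 → ℝ)))
          + ((0 : ℝ), (Pi.single 2 (y 2) : Fin 3 → ℝ)) = ((0 : ℝ), y) := by
        simp only [Prod.mk_add_mk, add_zero, Prod.mk.injEq]
        refine ⟨trivial, ?_⟩
        funext k
        fin_cases k <;> simp [Pi.single_apply]
      rwa [heq] at hA
    · -- temporal case
      intro y
      have hall : ∀ x : Fin 3 → ℝ, S.r 0 (d.1, x) := by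
        intro x
        have hde : S.r 0 (d.1, d.2) := by rwa [Prod.mk.eta]
        have h := hboost d.1 d.2 (d.1⁻¹ • (x - d.2)) hde
        have : d.2 + d.1 • d.1⁻¹ • (x - d.2) = x := by
          rw [smul_smul, mul_inv_cancel₀ hd1, one_smul]
          abel
        rwa [this] at h
      have h1 := hall y
      have h2 := hTneg _ (hall 0)
      have h3 := hTadd _ _ h1 h2
      have : (d.1, y) + -((d.1 : ℝ), (0 : Fin 3 → ℝ)) = ((0 : ℝ), y) := by
        simp [Prod.ext_iff]
      rwa [this] at h3
  -- conclude
  have hrp : r - p = ((0 : ℝ), r.2 - p.2) := by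
    apply Prod.ext
    · simp [hr]
    · rfl
  rw [hT_iff, hrp]
  exact key _
end

section
/- Let S be a non-trivial IGal-invariant equivalence relation on ℝ⁴ whose equivalence classes are connected subsets of ℝ⁴. Then the equivalence classes of S are exactly the hyperplanes Σ_t of constant time; i.e., S(p,q) if and only if p and q have equal time coordinate. -/
lemma connSubgroupReal (T : Set ℝ) (h0 : (0:ℝ) ∈ T)
    (hadd : ∀ a b, a ∈ T → b ∈ T → a + b ∈ T)
    (hneg : ∀ a, a ∈ T → -a ∈ T)
    (hconn : IsPreconnected T) (c : ℝ) (hc : c ∈ T) (hc0 : c ≠ 0) :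
    ∀ x, x ∈ T := by
  have habs : |c| ∈ T := by
    rcases abs_choice c with h | h
    · rwa [h]
    · rw [h]; exact hneg _ hc
  have hpos : 0 < |c| := abs_pos.mpr hc0
  have hIcc : Set.Icc 0 |c| ⊆ T := hconn.Icc_subset h0 habs
  have hz : ∀ n : ℤ, (n : ℝ) * |c| ∈ T := by
    intro n
    induction n using Int.induction_on with
    | zero => simpa using h0
    | succ k ih => push_cast; rw [add_mul, one_mul]; exact hadd _ _ ih habs
    | pred k ih =>
        push_cast at ih ⊢
        rw [sub_mul, one_mul, sub_eq_add_neg]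
        exact hadd _ _ ih (hneg _ habs)
  intro x
  have key : x = (↑⌊x / |c|⌋) * |c| + |c| * Int.fract (x / |c|) := by
    rw [Int.fract]
    field_simp
    ring
  rw [key]
  refine hadd _ _ (hz _) (hIcc ⟨?_, ?_⟩)
  · exact mul_nonneg hpos.le (Int.fract_nonneg _)
  · calc |c| * Int.fract (x / |c|) ≤ |c| * 1 :=
        mul_le_mul_of_nonneg_left (Int.fract_lt_one _).le hpos.le
    _ = |c| := mul_one _

def flipM (i : Fin 3) : Matrix (Fin 3) (Fin 3) ℝ :=
  Matrix.diagonal (fun j => if j = i then 1 else -1)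

def permM : Matrix (Fin 3) (Fin 3) ℝ :=
  !![0,1,0; 0,0,1; 1,0,0]

def ax (i : Fin 3) (r : ℝ) : Fin 3 → ℝ := fun j => if j = i then r else 0

lemma flipM_mem (i : Fin 3) : flipM i ∈ Matrix.specialOrthogonalGroup (Fin 3) ℝ := by
  rw [Matrix.mem_specialOrthogonalGroup_iff]
  constructor
  · rw [Matrix.mem_orthogonalGroup_iff]
    ext j k
    fin_cases i <;> fin_cases j <;> fin_cases k <;>
      simp [flipM, Matrix.mul_apply, Fin.sum_univ_three, Matrix.one_apply, Matrix.diagonal]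
  · fin_cases i <;> simp [flipM, Matrix.det_fin_three, Matrix.diagonal]

lemma permM_mem : permM ∈ Matrix.specialOrthogonalGroup (Fin 3) ℝ := by
  rw [Matrix.mem_specialOrthogonalGroup_iff]
  constructor
  · rw [Matrix.mem_orthogonalGroup_iff]
    ext j k
    fin_cases j <;> fin_cases k <;>
      simp [permM, Matrix.mul_apply, Fin.sum_univ_three, Matrix.one_apply]
  · simp [permM, Matrix.det_fin_three]

lemma flipM_mulVec (i : Fin 3) (w : Fin 3 → ℝ) :
    (flipM i).mulVec w = fun j => if j = i then w j else -(w j) := by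
  ext j
  simp only [flipM, Matrix.mulVec_diagonal]
  split <;> simp

lemma permM_mulVec (w : Fin 3 → ℝ) :
    permM.mulVec w = ![w 1, w 2, w 0] := by
  ext j
  fin_cases j <;> simp [permM, Matrix.mulVec, dotProduct, Fin.sum_univ_three]

lemma addFlip (i : Fin 3) (w : Fin 3 → ℝ) :
    w + (flipM i).mulVec w = ax i (2 * w i) := by
  ext j
  rw [flipM_mulVec]
  by_cases h : j = i
  · subst h; simp [ax, two_mul]
  · simp [ax, h]

lemma perm_ax0 (r : ℝ) : permM.mulVec (ax 0 r) = ax 2 r := by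
  rw [permM_mulVec]; ext j; fin_cases j <;> simp [ax]

lemma perm_ax1 (r : ℝ) : permM.mulVec (ax 1 r) = ax 0 r := by
  rw [permM_mulVec]; ext j; fin_cases j <;> simp [ax]

lemma perm_ax2 (r : ℝ) : permM.mulVec (ax 2 r) = ax 1 r := by
  rw [permM_mulVec]; ext j; fin_cases j <;> simp [ax]

lemma ax_decomp (w : Fin 3 → ℝ) : w = ax 0 (w 0) + ax 1 (w 1) + ax 2 (w 2) := by
  ext j; fin_cases j <;> simp [ax]

/-- A non-trivial `IGal`-invariant equivalence relation on spacetime with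
connected equivalence classes is exactly the relation of equal time
coordinate (standard Galilean simultaneity). -/
theorem IGal_invariant_connected_classes_eq_time
    (S : Setoid (ℝ × (Fin 3 → ℝ)))
    (hinv : ∀ (R : Matrix (Fin 3) (Fin 3) ℝ), R ∈ Matrix.specialOrthogonalGroup (Fin 3) ℝ →
      ∀ (v a : Fin 3 → ℝ) (b : ℝ) (p q : ℝ × (Fin 3 → ℝ)),
        S.r p q ↔ S.r (galAct R v a b p) (galAct R v a b q))
    (hne : ∃ p q, p ≠ q ∧ S.r p q) (hnt : ∃ p q, ¬ S.r p q)
    (hconn : ∀ p : ℝ × (Fin 3 → ℝ), IsConnected {q | S.r p q}) :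
    ∀ p q : ℝ × (Fin 3 → ℝ), S.r p q ↔ p.1 = q.1 := by
  have hone : (1 : Matrix (Fin 3) (Fin 3) ℝ) ∈ Matrix.specialOrthogonalGroup (Fin 3) ℝ :=
    one_mem _
  have htrans : ∀ (a : Fin 3 → ℝ) (p q : ℝ × (Fin 3 → ℝ)),
      S.r p q ↔ S.r (p.1, p.2 + a) (q.1, q.2 + a) := by
    intro a p q
    simpa [galAct, Matrix.one_mulVec] using hinv 1 hone 0 a 0 p q
  have htime : ∀ (b : ℝ) (p q : ℝ × (Fin 3 → ℝ)),
      S.r p q ↔ S.r (p.1 + b, p.2) (q.1 + b, q.2) := by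
    intro b p q
    simpa [galAct, Matrix.one_mulVec] using hinv 1 hone 0 0 b p q
  have hboost : ∀ (v a : Fin 3 → ℝ) (p q : ℝ × (Fin 3 → ℝ)),
      S.r p q ↔ S.r (p.1, p.2 + p.1 • v + a) (q.1, q.2 + q.1 • v + a) := by
    intro v a p q
    simpa [galAct, Matrix.one_mulVec] using hinv 1 hone v a 0 p q
  have hrot : ∀ R ∈ Matrix.specialOrthogonalGroup (Fin 3) ℝ, ∀ (p q : ℝ × (Fin 3 → ℝ)),
      S.r p q ↔ S.r (p.1, R.mulVec p.2) (q.1, R.mulVec q.2) := by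
    intro R hR p q
    simpa [galAct] using hinv R hR 0 0 0 p q
  by_cases hA : ∃ p q, S.r p q ∧ p.1 ≠ q.1
  · -- all points related : contradiction with hnt
    exfalso
    obtain ⟨p, q, hpq, hne1⟩ := hA
    have hdne : q.1 - p.1 ≠ 0 := sub_ne_zero_of_ne (Ne.symm hne1)
    have hA1 : ∀ y, S.r p (q.1, y) := by
      intro y
      set v : Fin 3 → ℝ := (q.1 - p.1)⁻¹ • (y - q.2) with hv
      have h2 : p.2 + p.1 • v + -(p.1 • v) = p.2 := by abel
      have h3 : q.2 + q.1 • v + -(p.1 • v) = y := by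
        have hsv : (q.1 - p.1) • v = y - q.2 := by
          rw [hv, smul_smul, mul_inv_cancel₀ hdne, one_smul]
        have h : q.1 • v - p.1 • v = y - q.2 := by rwa [← sub_smul]
        rw [add_assoc, ← sub_eq_add_neg, h]
        abel
      have := (hboost v (-(p.1 • v)) p q).mp hpq
      rw [h2, h3] at this
      simpa using this
    have hA2 : ∀ y y', S.r (q.1, y) (q.1, y') := fun y y' =>
      S.iseqv.trans (S.iseqv.symm (hA1 y)) (hA1 y')
    have hA3 : ∀ (t : ℝ) (y y' : Fin 3 → ℝ), S.r (t, y) (t, y') := by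
      intro t y y'
      have := (htime (t - q.1) (q.1, y) (q.1, y')).mp (hA2 y y')
      simpa using this
    have hA4 : ∀ (r s : ℝ × (Fin 3 → ℝ)), S.r r s ↔ S.r (r.1, 0) (s.1, 0) := by
      intro r s
      constructor
      · intro h
        exact S.iseqv.trans (S.iseqv.trans (hA3 r.1 0 r.2) (by simpa using h)) (hA3 s.1 s.2 0)
      · intro h
        have h1 : S.r (r.1, r.2) (s.1, s.2) :=
          S.iseqv.trans (S.iseqv.trans (hA3 r.1 r.2 0) h) (hA3 s.1 0 s.2)
        simpa using h1
    set T : Set ℝ := {b | S.r (0, 0) (b, 0)} with hTdef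
    have hT0 : (0:ℝ) ∈ T := S.iseqv.refl _
    have hTadd : ∀ a b, a ∈ T → b ∈ T → a + b ∈ T := by
      intro a b ha hb
      have := (htime a ((0:ℝ), (0:Fin 3 → ℝ)) (b, 0)).mp hb
      simp only [zero_add] at this
      exact S.iseqv.trans ha (by rwa [add_comm b a] at this)
    have hTneg : ∀ a, a ∈ T → -a ∈ T := by
      intro a ha
      have := (htime (-a) ((0:ℝ), (0:Fin 3 → ℝ)) (a, 0)).mp ha
      simp only [zero_add, add_neg_cancel] at this
      exact S.iseqv.symm this
    have hTc : q.1 - p.1 ∈ T := by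
      have h1 : S.r (p.1, (0:Fin 3 → ℝ)) (q.1, 0) := (hA4 p q).mp hpq
      have := (htime (-p.1) ((p.1:ℝ), (0:Fin 3 → ℝ)) (q.1, 0)).mp h1
      show S.r (0, 0) (q.1 - p.1, 0)
      simpa [add_neg_cancel, ← sub_eq_add_neg] using this
    have hTconn : IsPreconnected T := by
      have h1 : T = Prod.fst '' {r | S.r (0, 0) r} := by
        ext b
        constructor
        · intro hb; exact ⟨(b, 0), hb, rfl⟩
        · rintro ⟨r, hr, rfl⟩
          exact S.iseqv.trans hr (by simpa using hA3 r.1 r.2 0)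
      rw [h1]
      exact (((hconn _).image _ continuous_fst.continuousOn)).isPreconnected
    have hall := connSubgroupReal T hT0 hTadd hTneg hTconn _ hTc hdne
    obtain ⟨r, s, hrs⟩ := hnt
    refine hrs ((hA4 r s).mpr ?_)
    have := (htime r.1 ((0:ℝ), (0:Fin 3 → ℝ)) (s.1 - r.1, 0)).mp (hall (s.1 - r.1))
    simpa [sub_add_cancel] using this
  · -- case B : all related pairs have equal time
    push_neg at hA
    obtain ⟨p0, q0, hne0, hpq0⟩ := hne
    have ht0 : p0.1 = q0.1 := hA _ _ hpq0
    have hd0 : q0.2 - p0.2 ≠ 0 := by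
      intro h
      exact hne0 (Prod.ext ht0 (sub_eq_zero.mp h).symm)
    set D : Set (Fin 3 → ℝ) := {w | S.r (p0.1, 0) (p0.1, w)} with hDdef
    have hTr : ∀ (z w : Fin 3 → ℝ), S.r (p0.1, z) (p0.1, z + w) ↔ w ∈ D := by
      intro z w
      have := htrans z ((p0.1:ℝ), (0:Fin 3 → ℝ)) (p0.1, w)
      simp only [zero_add] at this
      rw [hDdef, Set.mem_setOf_eq, this, add_comm w z]
    have hd0mem : q0.2 - p0.2 ∈ D := by
      have h1 : S.r (p0.1, p0.2) (p0.1, q0.2) := by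
        have : S.r (p0.1, p0.2) (q0.1, q0.2) := by simpa using hpq0
        rwa [← ht0] at this
      have := (hTr p0.2 (q0.2 - p0.2))
      rw [add_sub_cancel] at this
      exact this.mp h1
    have hD0 : (0 : Fin 3 → ℝ) ∈ D := S.iseqv.refl _
    have hDadd : ∀ u w, u ∈ D → w ∈ D → u + w ∈ D := by
      intro u w hu hw
      exact S.iseqv.trans hu ((hTr u w).mpr hw)
    have hDneg : ∀ u, u ∈ D → -u ∈ D := by
      intro u hu
      have h2 : S.r (p0.1, -u) (p0.1, -u + u) := (hTr (-u) u).mpr hu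
      rw [neg_add_cancel] at h2
      exact S.iseqv.symm h2
    have hDrot : ∀ R ∈ Matrix.specialOrthogonalGroup (Fin 3) ℝ, ∀ w ∈ D, R.mulVec w ∈ D := by
      intro R hR w hw
      have := (hrot R hR ((p0.1:ℝ), (0:Fin 3 → ℝ)) (p0.1, w)).mp hw
      show S.r (p0.1, 0) (p0.1, R.mulVec w)
      simpa [Matrix.mulVec_zero] using this
    have hDax : ∀ (i : Fin 3), ∀ w ∈ D, ax i (2 * w i) ∈ D := by
      intro i w hw
      have h1 := hDrot _ (flipM_mem i) w hw
      have h2 := hDadd _ _ hw h1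
      rwa [addFlip] at h2
    -- some nonzero axis-0 element
    obtain ⟨i, hi⟩ : ∃ i, (q0.2 - p0.2) i ≠ 0 := by
      by_contra h
      push_neg at h
      exact hd0 (funext fun j => h j)
    have hax_i : ax i (2 * (q0.2 - p0.2) i) ∈ D := hDax i _ hd0mem
    have hs0 : ∃ s : ℝ, s ≠ 0 ∧ ax 0 s ∈ D := by
      refine ⟨2 * (q0.2 - p0.2) i, by simpa using hi, ?_⟩
      fin_cases i
      · exact hax_i
      · replace hax_i : ax 1 (2 * (q0.2 - p0.2) 1) ∈ D := hax_i
        have := hDrot _ permM_mem _ hax_i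
        rwa [perm_ax1] at this
      · replace hax_i : ax 2 (2 * (q0.2 - p0.2) 2) ∈ D := hax_i
        have h1 := hDrot _ permM_mem _ hax_i
        rw [perm_ax2] at h1
        have h2 := hDrot _ permM_mem _ h1
        rwa [perm_ax1] at h2
    obtain ⟨s, hs, hsD⟩ := hs0
    -- D is connected
    have hDconn : IsPreconnected D := by
      have h1 : D = Prod.snd '' {r | S.r (p0.1, 0) r} := by
        ext w
        constructor
        · intro hw; exact ⟨(p0.1, w), hw, rfl⟩
        · rintro ⟨r, hr, rfl⟩
          have hr1 : (p0.1 : ℝ) = r.1 := hA (p0.1, 0) r hr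
          have : S.r (p0.1, (0:Fin 3 → ℝ)) (r.1, r.2) := by simpa using hr
          rwa [← hr1] at this
      rw [h1]
      exact (((hconn _).image _ continuous_snd.continuousOn)).isPreconnected
    -- projection to coordinate 0
    set T0 : Set ℝ := (fun w : Fin 3 → ℝ => w 0) '' D with hT0def
    have hT0conn : IsPreconnected T0 :=
      hDconn.image _ (continuous_apply 0).continuousOn
    have hT00 : (0:ℝ) ∈ T0 := ⟨0, hD0, rfl⟩
    have hT0add : ∀ a b, a ∈ T0 → b ∈ T0 → a + b ∈ T0 := by
      rintro a b ⟨u, hu, rfl⟩ ⟨w, hw, rfl⟩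
      exact ⟨u + w, hDadd _ _ hu hw, rfl⟩
    have hT0neg : ∀ a, a ∈ T0 → -a ∈ T0 := by
      rintro a ⟨u, hu, rfl⟩
      exact ⟨-u, hDneg _ hu, rfl⟩
    have hT0s : s ∈ T0 := ⟨ax 0 s, hsD, by simp [ax]⟩
    have hT0all := connSubgroupReal T0 hT00 hT0add hT0neg hT0conn s hT0s hs
    -- full axis 0 in D
    have hax0 : ∀ r : ℝ, ax 0 r ∈ D := by
      intro r
      obtain ⟨w, hw, hw0⟩ := hT0all (r / 2)
      have hw0' : w 0 = r / 2 := hw0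
      have := hDax 0 w hw
      rw [hw0'] at this
      rwa [mul_div_cancel₀ r two_ne_zero] at this
    have hax2 : ∀ r : ℝ, ax 2 r ∈ D := by
      intro r
      have := hDrot _ permM_mem _ (hax0 r)
      rwa [perm_ax0] at this
    have hax1 : ∀ r : ℝ, ax 1 r ∈ D := by
      intro r
      have := hDrot _ permM_mem _ (hax2 r)
      rwa [perm_ax2] at this
    have hDall : ∀ w : Fin 3 → ℝ, w ∈ D := by
      intro w
      rw [ax_decomp w]
      exact hDadd _ _ (hDadd _ _ (hax0 _) (hax1 _)) (hax2 _)
    -- conclude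
    intro p q
    constructor
    · exact hA p q
    · intro h
      have h1 : S.r (p0.1, p.2) (p0.1, q.2) := by
        have := (hTr p.2 (q.2 - p.2)).mpr (hDall _)
        rwa [add_sub_cancel] at this
      have h2 := (htime (p.1 - p0.1) ((p0.1:ℝ), p.2) (p0.1, q.2)).mp h1
      rw [add_sub_cancel] at h2
      have h3 : S.r (p.1, p.2) (q.1, q.2) := by rw [← h]; exact h2
      simpa using h3
end

section
/- The only ILor-invariant equivalence relation on ℝ⁴ relating at least two distinct points is the trivial one in which all of ℝ⁴ is a single equivalence class. In particular there is no non-trivial equivalence relation on Minkowski spacetime invariant under the identity component of the Poincaré group. -/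
/-- The Minkowski metric matrix `η = diag(1,-1,-1,-1)`. -/
def minkowskiEta : Matrix (Fin 4) (Fin 4) ℝ :=
  Matrix.diagonal ![1, -1, -1, -1]

namespace ILorTrivAux

/-- Rotation by π about the z-axis. -/
def Rz : Matrix (Fin 4) (Fin 4) ℝ := !![1,0,0,0; 0,-1,0,0; 0,0,-1,0; 0,0,0,1]
/-- Rotation by π about the y-axis. -/
def Ry : Matrix (Fin 4) (Fin 4) ℝ := !![1,0,0,0; 0,-1,0,0; 0,0,1,0; 0,0,0,-1]
/-- Rotation by π about the x-axis. -/
def Rx : Matrix (Fin 4) (Fin 4) ℝ := !![1,0,0,0; 0,1,0,0; 0,0,-1,0; 0,0,0,-1]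
/-- Rotation by π/2 about the z-axis (sends x-axis to y-axis). -/
def Pxy : Matrix (Fin 4) (Fin 4) ℝ := !![1,0,0,0; 0,0,-1,0; 0,1,0,0; 0,0,0,1]
/-- Inverse rotation of `Pxy`. -/
def Pyx : Matrix (Fin 4) (Fin 4) ℝ := !![1,0,0,0; 0,0,1,0; 0,-1,0,0; 0,0,0,1]
/-- Rotation sending the x-axis to the z-axis. -/
def Qxz : Matrix (Fin 4) (Fin 4) ℝ := !![1,0,0,0; 0,0,0,-1; 0,0,1,0; 0,1,0,0]
/-- Rotation sending the z-axis to the x-axis. -/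
def Qzx : Matrix (Fin 4) (Fin 4) ℝ := !![1,0,0,0; 0,0,0,1; 0,0,1,0; 0,-1,0,0]
/-- A boost along the x-axis with `sinh φ = r`. -/
noncomputable def Bst (r : ℝ) : Matrix (Fin 4) (Fin 4) ℝ :=
  !![Real.sqrt (1+r^2), r, 0, 0; r, Real.sqrt (1+r^2), 0, 0; 0,0,1,0; 0,0,0,1]

lemma sqrt_sq (r : ℝ) : Real.sqrt (1+r^2) * Real.sqrt (1+r^2) = 1 + r^2 :=
  Real.mul_self_sqrt (by positivity)

lemma Rz_lor : Rz * minkowskiEta * Rz.transpose = minkowskiEta := by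
  ext i j; fin_cases i <;> fin_cases j <;>
    simp [Rz, minkowskiEta, Matrix.mul_apply, Fin.sum_univ_four, Matrix.diagonal,
      Matrix.vecHead, Matrix.vecTail]
lemma Rz_det : Rz.det = 1 := by
  simp [Rz, Matrix.det_succ_row_zero, Fin.sum_univ_succ]
lemma Rz_pos : (1:ℝ) ≤ Rz 0 0 := by norm_num [Rz]
lemma Rz_mulVec (v : Fin 4 → ℝ) : Rz.mulVec v = ![v 0, -v 1, -v 2, v 3] := by
  funext i; fin_cases i <;>
    simp [Rz, Matrix.mulVec, dotProduct, Fin.sum_univ_four,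
      Matrix.vecHead, Matrix.vecTail]

lemma Ry_lor : Ry * minkowskiEta * Ry.transpose = minkowskiEta := by
  ext i j; fin_cases i <;> fin_cases j <;>
    simp [Ry, minkowskiEta, Matrix.mul_apply, Fin.sum_univ_four, Matrix.diagonal,
      Matrix.vecHead, Matrix.vecTail]
lemma Ry_det : Ry.det = 1 := by
  simp [Ry, Matrix.det_succ_row_zero, Fin.sum_univ_succ]
lemma Ry_pos : (1:ℝ) ≤ Ry 0 0 := by norm_num [Ry]
lemma Ry_mulVec (v : Fin 4 → ℝ) : Ry.mulVec v = ![v 0, -v 1, v 2, -v 3] := by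
  funext i; fin_cases i <;>
    simp [Ry, Matrix.mulVec, dotProduct, Fin.sum_univ_four,
      Matrix.vecHead, Matrix.vecTail]

lemma Rx_lor : Rx * minkowskiEta * Rx.transpose = minkowskiEta := by
  ext i j; fin_cases i <;> fin_cases j <;>
    simp [Rx, minkowskiEta, Matrix.mul_apply, Fin.sum_univ_four, Matrix.diagonal,
      Matrix.vecHead, Matrix.vecTail]
lemma Rx_det : Rx.det = 1 := by
  simp [Rx, Matrix.det_succ_row_zero, Fin.sum_univ_succ]
lemma Rx_pos : (1:ℝ) ≤ Rx 0 0 := by norm_num [Rx]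
lemma Rx_mulVec (v : Fin 4 → ℝ) : Rx.mulVec v = ![v 0, v 1, -v 2, -v 3] := by
  funext i; fin_cases i <;>
    simp [Rx, Matrix.mulVec, dotProduct, Fin.sum_univ_four,
      Matrix.vecHead, Matrix.vecTail]

lemma Pxy_lor : Pxy * minkowskiEta * Pxy.transpose = minkowskiEta := by
  ext i j; fin_cases i <;> fin_cases j <;>
    simp [Pxy, minkowskiEta, Matrix.mul_apply, Fin.sum_univ_four, Matrix.diagonal,
      Matrix.vecHead, Matrix.vecTail]
lemma Pxy_det : Pxy.det = 1 := by
  simp [Pxy, Matrix.det_succ_row_zero, Fin.sum_univ_succ]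
lemma Pxy_pos : (1:ℝ) ≤ Pxy 0 0 := by norm_num [Pxy]
lemma Pxy_mulVec (v : Fin 4 → ℝ) : Pxy.mulVec v = ![v 0, -v 2, v 1, v 3] := by
  funext i; fin_cases i <;>
    simp [Pxy, Matrix.mulVec, dotProduct, Fin.sum_univ_four,
      Matrix.vecHead, Matrix.vecTail]

lemma Pyx_lor : Pyx * minkowskiEta * Pyx.transpose = minkowskiEta := by
  ext i j; fin_cases i <;> fin_cases j <;>
    simp [Pyx, minkowskiEta, Matrix.mul_apply, Fin.sum_univ_four, Matrix.diagonal,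
      Matrix.vecHead, Matrix.vecTail]
lemma Pyx_det : Pyx.det = 1 := by
  simp [Pyx, Matrix.det_succ_row_zero, Fin.sum_univ_succ]
lemma Pyx_pos : (1:ℝ) ≤ Pyx 0 0 := by norm_num [Pyx]
lemma Pyx_mulVec (v : Fin 4 → ℝ) : Pyx.mulVec v = ![v 0, v 2, -v 1, v 3] := by
  funext i; fin_cases i <;>
    simp [Pyx, Matrix.mulVec, dotProduct, Fin.sum_univ_four,
      Matrix.vecHead, Matrix.vecTail]

lemma Qxz_lor : Qxz * minkowskiEta * Qxz.transpose = minkowskiEta := by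
  ext i j; fin_cases i <;> fin_cases j <;>
    simp [Qxz, minkowskiEta, Matrix.mul_apply, Fin.sum_univ_four, Matrix.diagonal,
      Matrix.vecHead, Matrix.vecTail]
lemma Qxz_det : Qxz.det = 1 := by
  simp [Qxz, Matrix.det_succ_row_zero, Fin.sum_univ_succ]
lemma Qxz_pos : (1:ℝ) ≤ Qxz 0 0 := by norm_num [Qxz]
lemma Qxz_mulVec (v : Fin 4 → ℝ) : Qxz.mulVec v = ![v 0, -v 3, v 2, v 1] := by
  funext i; fin_cases i <;>
    simp [Qxz, Matrix.mulVec, dotProduct, Fin.sum_univ_four,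
      Matrix.vecHead, Matrix.vecTail]

lemma Qzx_lor : Qzx * minkowskiEta * Qzx.transpose = minkowskiEta := by
  ext i j; fin_cases i <;> fin_cases j <;>
    simp [Qzx, minkowskiEta, Matrix.mul_apply, Fin.sum_univ_four, Matrix.diagonal,
      Matrix.vecHead, Matrix.vecTail]
lemma Qzx_det : Qzx.det = 1 := by
  simp [Qzx, Matrix.det_succ_row_zero, Fin.sum_univ_succ]
lemma Qzx_pos : (1:ℝ) ≤ Qzx 0 0 := by norm_num [Qzx]
lemma Qzx_mulVec (v : Fin 4 → ℝ) : Qzx.mulVec v = ![v 0, v 3, v 2, -v 1] := by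
  funext i; fin_cases i <;>
    simp [Qzx, Matrix.mulVec, dotProduct, Fin.sum_univ_four,
      Matrix.vecHead, Matrix.vecTail]

lemma Bst_lor (r : ℝ) : Bst r * minkowskiEta * (Bst r).transpose = minkowskiEta := by
  have h := sqrt_sq r
  ext i j; fin_cases i <;> fin_cases j <;>
    simp [Bst, minkowskiEta, Matrix.mul_apply, Fin.sum_univ_four, Matrix.diagonal,
      Matrix.vecHead, Matrix.vecTail] <;> nlinarith [h]
lemma Bst_det (r : ℝ) : (Bst r).det = 1 := by
  have h := sqrt_sq r
  simp [Bst, Matrix.det_succ_row_zero, Fin.sum_univ_succ, Fin.succAbove,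
    Matrix.vecHead, Matrix.vecTail]
  nlinarith [h]
lemma Bst_pos (r : ℝ) : (1:ℝ) ≤ Bst r 0 0 := by
  have h := sqrt_sq r
  have h0 := Real.sqrt_nonneg (1+r^2)
  have e : Bst r 0 0 = Real.sqrt (1+r^2) := by simp [Bst]
  rw [e]; nlinarith [sq_nonneg r]
lemma Bst_mulVec (r : ℝ) (v : Fin 4 → ℝ) :
    (Bst r).mulVec v = ![Real.sqrt (1+r^2) * v 0 + r * v 1,
      r * v 0 + Real.sqrt (1+r^2) * v 1, v 2, v 3] := by
  funext i; fin_cases i <;>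
    simp [Bst, Matrix.mulVec, dotProduct, Fin.sum_univ_four,
      Matrix.vecHead, Matrix.vecTail] <;> ring

end ILorTrivAux

open ILorTrivAux in
/-- The only equivalence relation on Minkowski spacetime `ℝ⁴` invariant under
the inhomogeneous proper orthochronous Lorentz (Poincaré) group and relating at
least two distinct points is the total relation; hence there is no non-trivial
`ILor`-invariant equivalence relation. -/
theorem ILor_invariant_rel_trivial
    (S : Setoid (Fin 4 → ℝ))
    (hinv : ∀ L : Matrix (Fin 4) (Fin 4) ℝ,
      L * minkowskiEta * L.transpose = minkowskiEta → L.det = 1 → 1 ≤ L 0 0 →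
      ∀ (a : Fin 4 → ℝ) (p q : Fin 4 → ℝ),
        S.r p q ↔ S.r (L.mulVec p + a) (L.mulVec q + a))
    (hne : ∃ p q, p ≠ q ∧ S.r p q) :
    ∀ p q : Fin 4 → ℝ, S.r p q := by
  -- invariance under translations
  have htr : ∀ (a p q : Fin 4 → ℝ), S.r p q ↔ S.r (p + a) (q + a) := by
    intro a p q
    have h := hinv 1 (by simp) (by simp) (by simp [Matrix.one_apply]) a p q
    simpa [Matrix.one_mulVec] using h
  set T : (Fin 4 → ℝ) → Prop := fun v => S.r 0 v with hT
  -- relation depends only on differences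
  have hdiff : ∀ p q : Fin 4 → ℝ, S.r p q ↔ T (q - p) := by
    intro p q
    have h := htr (-p) p q
    simpa [sub_eq_add_neg] using h
  -- T is closed under addition
  have hadd : ∀ u v, T u → T v → T (u + v) := by
    intro u v hu hv
    have h : S.r u (v + u) := by
      have := (htr u 0 v).1 hv
      simpa using this
    have h2 : S.r 0 (v + u) := S.iseqv.trans hu h
    simpa [add_comm] using h2
  -- T is closed under Lorentz transformations
  have hL : ∀ L : Matrix (Fin 4) (Fin 4) ℝ,
      L * minkowskiEta * L.transpose = minkowskiEta → L.det = 1 → 1 ≤ L 0 0 →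
      ∀ v, T v → T (L.mulVec v) := by
    intro L h1 h2 h3 v hv
    have h := (hinv L h1 h2 h3 0 0 v).1 hv
    simpa [Matrix.mulVec_zero] using h
  have hTRz : ∀ v, T v → T ![v 0, -v 1, -v 2, v 3] := fun v hv => by
    have := hL Rz Rz_lor Rz_det Rz_pos v hv; rwa [Rz_mulVec] at this
  have hTRy : ∀ v, T v → T ![v 0, -v 1, v 2, -v 3] := fun v hv => by
    have := hL Ry Ry_lor Ry_det Ry_pos v hv; rwa [Ry_mulVec] at this
  have hTRx : ∀ v, T v → T ![v 0, v 1, -v 2, -v 3] := fun v hv => by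
    have := hL Rx Rx_lor Rx_det Rx_pos v hv; rwa [Rx_mulVec] at this
  have hTPxy : ∀ v, T v → T ![v 0, -v 2, v 1, v 3] := fun v hv => by
    have := hL Pxy Pxy_lor Pxy_det Pxy_pos v hv; rwa [Pxy_mulVec] at this
  have hTPyx : ∀ v, T v → T ![v 0, v 2, -v 1, v 3] := fun v hv => by
    have := hL Pyx Pyx_lor Pyx_det Pyx_pos v hv; rwa [Pyx_mulVec] at this
  have hTQxz : ∀ v, T v → T ![v 0, -v 3, v 2, v 1] := fun v hv => by
    have := hL Qxz Qxz_lor Qxz_det Qxz_pos v hv; rwa [Qxz_mulVec] at this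
  have hTQzx : ∀ v, T v → T ![v 0, v 3, v 2, -v 1] := fun v hv => by
    have := hL Qzx Qzx_lor Qzx_det Qzx_pos v hv; rwa [Qzx_mulVec] at this
  have hTB : ∀ (r : ℝ) v, T v → T ![Real.sqrt (1+r^2) * v 0 + r * v 1,
      r * v 0 + Real.sqrt (1+r^2) * v 1, v 2, v 3] := fun r v hv => by
    have := hL (Bst r) (Bst_lor r) (Bst_det r) (Bst_pos r) v hv
    rwa [Bst_mulVec] at this
  -- T is closed under negation and subtraction
  have hneg : ∀ v, T v → T (-v) := by
    intro v hv
    have h : S.r (-v) 0 := by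
      have := (htr (-v) 0 v).1 hv
      simpa using this
    exact S.iseqv.symm h
  have hsub : ∀ u w, T u → T w → T (u - w) := by
    intro u w hu hw
    have := hadd u (-w) hu (hneg w hw)
    simpa [sub_eq_add_neg] using this
  -- a congruence helper
  have hcongr : ∀ u w, u = w → T u → T w := by rintro u w rfl h; exact h
  -- x-component extraction: from T v we get T (0, 4 v₁, 0, 0)
  have hxext : ∀ v, T v → T ![0, 4 * v 1, 0, 0] := by
    intro v hv
    have a1 : T ![0, 2 * v 1, 2 * v 2, 0] := by
      refine hcongr _ _ ?_ (hsub v _ hv (hTRz v hv))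
      funext i; fin_cases i <;> simp [Matrix.vecHead, Matrix.vecTail] <;> ring
    have a2 : T ![0, 2 * v 1, 0, 2 * v 3] := by
      refine hcongr _ _ ?_ (hsub v _ hv (hTRy v hv))
      funext i; fin_cases i <;> simp [Matrix.vecHead, Matrix.vecTail] <;> ring
    have a3 : T ![0, 0, 2 * v 2, 2 * v 3] := by
      refine hcongr _ _ ?_ (hsub v _ hv (hTRx v hv))
      funext i; fin_cases i <;> simp [Matrix.vecHead, Matrix.vecTail] <;> ring
    refine hcongr _ _ ?_ (hsub _ _ (hadd _ _ a1 a2) a3)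
    funext i; fin_cases i <;> simp [Matrix.vecHead, Matrix.vecTail] <;> ring
  -- from a nonzero multiple of e₁ we get the whole time axis
  have htline : ∀ s : ℝ, s ≠ 0 → T ![0, s, 0, 0] → ∀ t : ℝ, T ![t, 0, 0, 0] := by
    intro s hs h t
    set r := t / (2 * s) with hr
    set c := Real.sqrt (1 + r ^ 2) with hc
    have hw : T ![r * s, c * s, 0, 0] := by
      refine hcongr _ _ ?_ (hTB r ![0, s, 0, 0] h)
      funext i; fin_cases i <;> simp [Matrix.vecHead, Matrix.vecTail, hc] <;> ring
    refine hcongr _ _ ?_ (hadd _ _ hw (hTRz _ hw))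
    funext i; fin_cases i <;> simp [Matrix.vecHead, Matrix.vecTail] <;>
      field_simp [hr] <;> rw [hr] <;> field_simp <;> ring
  -- find a vector in T with nonzero x-component
  obtain ⟨p₀, q₀, hpq, hS⟩ := hne
  have hv₀ : T (q₀ - p₀) := (hdiff p₀ q₀).1 hS
  have hv₀ne : q₀ - p₀ ≠ 0 := sub_ne_zero_of_ne (Ne.symm hpq)
  set v₀ : Fin 4 → ℝ := q₀ - p₀ with hv₀def
  have hex : ∃ w, T w ∧ w 1 ≠ 0 := by
    by_cases h1 : v₀ 1 ≠ 0
    · exact ⟨v₀, hv₀, h1⟩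
    by_cases h2 : v₀ 2 ≠ 0
    · exact ⟨_, hTPyx v₀ hv₀, by simpa using h2⟩
    by_cases h3 : v₀ 3 ≠ 0
    · exact ⟨_, hTQzx v₀ hv₀, by simpa using h3⟩
    push_neg at h1 h2 h3
    have h0 : v₀ 0 ≠ 0 := by
      intro h0
      apply hv₀ne
      funext i; fin_cases i <;> simpa using (by assumption : _)
    refine ⟨_, hTB 1 v₀ hv₀, ?_⟩
    simpa [h1] using h0
  obtain ⟨w, hTw, hw1⟩ := hex
  -- all of the time axis
  have hallt : ∀ t : ℝ, T ![t, 0, 0, 0] := by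
    intro t
    exact htline (4 * w 1) (by simpa using hw1) (hxext w hTw) t
  -- all of the x-axis
  have hallx : ∀ s : ℝ, T ![0, s, 0, 0] := by
    intro s
    have hb : T ![Real.sqrt (1 + 1 ^ 2) * (s / 4), s / 4, 0, 0] := by
      refine hcongr _ _ ?_ (hTB 1 ![s / 4, 0, 0, 0] (hallt (s / 4)))
      funext i; fin_cases i <;> simp [Matrix.vecHead, Matrix.vecTail] <;> ring
    refine hcongr _ _ ?_ (hxext _ hb)
    funext i; fin_cases i <;> simp [Matrix.vecHead, Matrix.vecTail] <;> ring
  -- all of the y- and z-axes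
  have hally : ∀ s : ℝ, T ![0, 0, s, 0] := by
    intro s
    refine hcongr _ _ ?_ (hTPxy _ (hallx s))
    funext i; fin_cases i <;> simp [Matrix.vecHead, Matrix.vecTail]
  have hallz : ∀ s : ℝ, T ![0, 0, 0, s] := by
    intro s
    refine hcongr _ _ ?_ (hTQxz _ (hallx s))
    funext i; fin_cases i <;> simp [Matrix.vecHead, Matrix.vecTail]
  -- conclude
  intro p q
  rw [hdiff]
  set d : Fin 4 → ℝ := q - p with hd
  refine hcongr _ _ ?_
    (hadd _ _ (hadd _ _ (hadd _ _ (hallt (d 0)) (hallx (d 1))) (hally (d 2))) (hallz (d 3)))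
  funext i; fin_cases i <;> simp [Matrix.vecHead, Matrix.vecTail]
end

section
/- Let G = ℝ × Euc act on ℝ⁴ = ℝ × ℝ³ by (b,(D,a))·(t,x) = (t+b, Dx+a). The unique non-trivial G-invariant equivalence relation on ℝ⁴ each of whose equivalence classes meets every timelike straight line in at most one point is the relation of equal time coordinate (Einstein simultaneity): S(p,q) ⟺ t(p) = t(q). -/
/-- The action of an element `(b, (D, a))` of `ℝ × Euc(3)` (time translations
together with Euclidean motions of space) on spacetime `ℝ × ℝ³`:
`(t, x) ↦ (t + b, D x + a)`. -/
def frameAct (b : ℝ) (D : Matrix (Fin 3) (Fin 3) ℝ) (a : Fin 3 → ℝ) :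
    ℝ × (Fin 3 → ℝ) → ℝ × (Fin 3 → ℝ) :=
  fun p => (p.1 + b, D.mulVec p.2 + a)

/-- `S` is a non-trivial `ℝ × Euc`-invariant equivalence relation each of whose
equivalence classes meets every timelike straight line (direction `u` with
`η(u,u) > 0`) in at most one point. -/
def GoodSimRel (S : Setoid (ℝ × (Fin 3 → ℝ))) : Prop :=
  (∀ (b : ℝ) (D : Matrix (Fin 3) (Fin 3) ℝ),
    D ∈ Matrix.specialOrthogonalGroup (Fin 3) ℝ →
    ∀ (a : Fin 3 → ℝ) (p q : ℝ × (Fin 3 → ℝ)),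
      S.r p q ↔ S.r (frameAct b D a p) (frameAct b D a q)) ∧
  (∃ p q, p ≠ q ∧ S.r p q) ∧ (∃ p q, ¬ S.r p q) ∧
  (∀ base u : ℝ × (Fin 3 → ℝ), (∑ i, u.2 i ^ 2) < u.1 ^ 2 →
    ∀ s t : ℝ, S.r (base + s • u) (base + t • u) → s = t)

/-! ### Auxiliary 3-dimensional vector algebra -/

/-- squared Euclidean norm of a 3-vector -/
noncomputable def sq3 (v : Fin 3 → ℝ) : ℝ := v 0 ^ 2 + v 1 ^ 2 + v 2 ^ 2

/-- Euclidean dot product of 3-vectors -/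
noncomputable def dot3 (v w : Fin 3 → ℝ) : ℝ := v 0 * w 0 + v 1 * w 1 + v 2 * w 2

lemma vec3_ext {α : Type*} {a b c d e f : α} (h1 : a = d) (h2 : b = e) (h3 : c = f) :
    ![a,b,c] = ![d,e,f] := by subst h1 h2 h3; rfl

lemma sq3_pos {v : Fin 3 → ℝ} (hv : v ≠ 0) : 0 < sq3 v := by
  have h0 : ¬ (v 0 = 0 ∧ v 1 = 0 ∧ v 2 = 0) := by
    rintro ⟨h1, h2, h3⟩
    apply hv; funext i; fin_cases i <;> simpa
  rcases lt_or_eq_of_le (by unfold sq3; positivity : (0:ℝ) ≤ sq3 v) with h | h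
  · exact h
  · exfalso; unfold sq3 at h
    exact h0 ⟨by nlinarith, by nlinarith, by nlinarith⟩

lemma eq_zero_of_sq3 {v : Fin 3 → ℝ} (hv : sq3 v = 0) : v = 0 := by
  by_contra h
  exact absurd hv (sq3_pos h).ne'

/-- the reflection in the hyperplane orthogonal to `v` -/
noncomputable def reflMat (v : Fin 3 → ℝ) : Matrix (Fin 3) (Fin 3) ℝ :=
  !![1 - 2*v 0*v 0/(sq3 v), -2*v 0*v 1/(sq3 v), -2*v 0*v 2/(sq3 v);
     -2*v 1*v 0/(sq3 v), 1 - 2*v 1*v 1/(sq3 v), -2*v 1*v 2/(sq3 v);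
     -2*v 2*v 0/(sq3 v), -2*v 2*v 1/(sq3 v), 1 - 2*v 2*v 2/(sq3 v)]

lemma reflMat_star (v : Fin 3 → ℝ) : star (reflMat v) = reflMat v := by
  rw [Matrix.star_eq_conjTranspose, Matrix.conjTranspose_eq_transpose_of_trivial]
  funext x y
  fin_cases x <;> fin_cases y <;> simp [reflMat, Matrix.transpose] <;> ring_nf

lemma reflMat_mulVec (v x : Fin 3 → ℝ) :
    (reflMat v).mulVec x = ![x 0 - 2 * v 0 * dot3 v x / sq3 v,
      x 1 - 2 * v 1 * dot3 v x / sq3 v, x 2 - 2 * v 2 * dot3 v x / sq3 v] := by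
  funext i
  fin_cases i <;>
    simp [reflMat, Matrix.mulVec, dotProduct, Fin.sum_univ_three, dot3] <;> ring

set_option maxHeartbeats 1000000 in
lemma reflMat_orth (v : Fin 3 → ℝ) (hv : v ≠ 0) : reflMat v * star (reflMat v) = 1 := by
  have hQ : v 0 ^ 2 + v 1 ^ 2 + v 2 ^ 2 ≠ 0 := by
    have := (sq3_pos hv).ne'; unfold sq3 at this; exact this
  rw [reflMat_star, reflMat]
  show (_ : Matrix (Fin 3) (Fin 3) ℝ) * _ = _
  rw [Matrix.mul_fin_three, Matrix.one_fin_three]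
  unfold sq3
  congr 1
  refine vec3_ext (vec3_ext ?_ ?_ ?_) (vec3_ext ?_ ?_ ?_) (vec3_ext ?_ ?_ ?_) <;>
    (field_simp; ring)

set_option maxHeartbeats 1000000 in
lemma reflMat_det (v : Fin 3 → ℝ) (hv : v ≠ 0) : (reflMat v).det = -1 := by
  have hQ : v 0 ^ 2 + v 1 ^ 2 + v 2 ^ 2 ≠ 0 := by
    have := (sq3_pos hv).ne'; unfold sq3 at this; exact this
  rw [reflMat, Matrix.det_fin_three]
  simp only [Matrix.cons_val', Matrix.cons_val_zero, Matrix.cons_val_one, Matrix.head_cons,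
    Matrix.empty_val', Matrix.cons_val_fin_one, Matrix.head_fin_const, Matrix.of_apply,
    Matrix.cons_val_two, Matrix.vecTail, Matrix.vecHead, Function.comp, Matrix.cons_val_succ]
  unfold sq3
  field_simp
  ring

lemma two_refl_mem_SO3 {v w : Fin 3 → ℝ} (hv : v ≠ 0) (hw : w ≠ 0) :
    reflMat w * reflMat v ∈ Matrix.specialOrthogonalGroup (Fin 3) ℝ := by
  rw [Matrix.mem_specialOrthogonalGroup_iff]
  constructor
  · rw [Matrix.mem_orthogonalGroup_iff, ← Matrix.conjTranspose_eq_transpose_of_trivial,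
      ← Matrix.star_eq_conjTranspose, star_mul, mul_assoc, ← mul_assoc (reflMat v),
      reflMat_orth v hv, one_mul, reflMat_orth w hw]
  · rw [Matrix.det_mul, reflMat_det v hv, reflMat_det w hw]; norm_num

/-- every 3-vector has a non-zero orthogonal vector -/
lemma perp3 (v : Fin 3 → ℝ) : ∃ w : Fin 3 → ℝ, w ≠ 0 ∧ dot3 w v = 0 := by
  by_cases h : v 0 = 0 ∧ v 1 = 0
  · refine ⟨![1, 0, 0], ?_, ?_⟩
    · intro hw
      have := congrFun hw 0
      norm_num at this
    · simp [dot3, h.1]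
  · refine ⟨![-(v 1), v 0, 0], ?_, ?_⟩
    · intro hw
      apply h
      constructor
      · have := congrFun hw 1; simpa using this
      · have := congrFun hw 0; simpa using this
    · simp [dot3]; ring

/-- orthogonal vectors of arbitrary prescribed squared length exist -/
lemma perp3_norm (v : Fin 3 → ℝ) (c : ℝ) (hc : 0 ≤ c) :
    ∃ z : Fin 3 → ℝ, sq3 z = c ∧ dot3 z v = 0 := by
  obtain ⟨w, hw, hwv⟩ := perp3 v
  have hQ : 0 < sq3 w := sq3_pos hw
  refine ⟨Real.sqrt (c / sq3 w) • w, ?_, ?_⟩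
  · have h1 : Real.sqrt (c / sq3 w) ^ 2 = c / sq3 w :=
      Real.sq_sqrt (by positivity)
    have : sq3 (Real.sqrt (c / sq3 w) • w) = Real.sqrt (c / sq3 w) ^ 2 * sq3 w := by
      simp [sq3, Pi.smul_apply, smul_eq_mul]; ring
    rw [this, h1]
    field_simp
  · have : dot3 (Real.sqrt (c / sq3 w) • w) v = Real.sqrt (c / sq3 w) * dot3 w v := by
      simp [dot3, Pi.smul_apply, smul_eq_mul]; ring
    rw [this, hwv, mul_zero]

/-- any two 3-vectors of the same length are related by a rotation -/
lemma rot_norm (x y : Fin 3 → ℝ) (h : sq3 x = sq3 y) :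
    ∃ D ∈ Matrix.specialOrthogonalGroup (Fin 3) ℝ, D.mulVec x = y := by
  by_cases hxy : x = y
  · refine ⟨1, ?_, by rw [Matrix.one_mulVec, hxy]⟩
    rw [Matrix.mem_specialOrthogonalGroup_iff]
    exact ⟨by rw [Matrix.mem_orthogonalGroup_iff]; simp, by simp⟩
  · have hv : x - y ≠ 0 := sub_ne_zero.mpr hxy
    have hy : y ≠ 0 := by
      intro h0
      apply hxy
      rw [h0] at h ⊢
      exact eq_zero_of_sq3 (by simpa [sq3] using h)
    obtain ⟨w, hw, hwy⟩ := perp3 y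
    refine ⟨reflMat w * reflMat (x - y), two_refl_mem_SO3 hv hw, ?_⟩
    rw [← Matrix.mulVec_mulVec]
    have hstep1 : (reflMat (x - y)).mulVec x = y := by
      have hQ : sq3 (x - y) ≠ 0 := (sq3_pos hv).ne'
      have h2 : 2 * dot3 (x - y) x = sq3 (x - y) := by
        unfold sq3 at h ⊢
        simp only [dot3, Pi.sub_apply]
        linear_combination h
      have hterm : ∀ i : Fin 3, 2 * (x - y) i * dot3 (x - y) x / sq3 (x - y) = (x - y) i := by
        intro i
        rw [show 2 * (x - y) i * dot3 (x - y) x = (x - y) i * (2 * dot3 (x - y) x) by ring,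
          h2, mul_div_assoc, div_self hQ, mul_one]
      have hterm' : ∀ i : Fin 3, 2 * (x i - y i) * dot3 (x - y) x / sq3 (x - y) = x i - y i := by
        intro i; simpa using hterm i
      rw [reflMat_mulVec]
      funext i
      fin_cases i <;> simp <;> linarith [hterm' 0, hterm' 1, hterm' 2]
    rw [hstep1]
    have hQw : sq3 w ≠ 0 := (sq3_pos hw).ne'
    rw [reflMat_mulVec]
    have hd : dot3 w y = 0 := hwy
    funext i
    fin_cases i <;> simp [hd]

lemma one_mem_SO3 : (1 : Matrix (Fin 3) (Fin 3) ℝ) ∈ Matrix.specialOrthogonalGroup (Fin 3) ℝ := by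
  rw [Matrix.mem_specialOrthogonalGroup_iff]
  exact ⟨by rw [Matrix.mem_orthogonalGroup_iff]; simp, by simp⟩

/-- diagonal sign matrices with an even number of `-1`s are rotations -/
lemma diagSign_mem (a b c : ℝ) (ha : a * a = 1) (hb : b * b = 1) (hc : c * c = 1)
    (habc : a * (b * c) = 1) :
    !![a,0,0;0,b,0;0,0,c] ∈ Matrix.specialOrthogonalGroup (Fin 3) ℝ := by
  rw [Matrix.mem_specialOrthogonalGroup_iff]
  constructor
  · rw [Matrix.mem_orthogonalGroup_iff]
    have hstar : star (!![a,0,0;0,b,0;0,0,c]) = !![a,0,0;0,b,0;0,0,c] := by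
      rw [Matrix.star_eq_conjTranspose, Matrix.conjTranspose_eq_transpose_of_trivial]
      funext x y
      fin_cases x <;> fin_cases y <;>
        simp [Matrix.transpose, Matrix.vecHead, Matrix.vecTail]
    rw [← Matrix.conjTranspose_eq_transpose_of_trivial, ← Matrix.star_eq_conjTranspose,
      hstar, Matrix.mul_fin_three, Matrix.one_fin_three]
    congr 1
    refine vec3_ext (vec3_ext ?_ ?_ ?_) (vec3_ext ?_ ?_ ?_) (vec3_ext ?_ ?_ ?_) <;>
      nlinarith [ha, hb, hc]
  · rw [Matrix.det_fin_three]
    simp [Matrix.vecHead, Matrix.vecTail]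
    linear_combination habc

lemma diagSign_mulVec (a b c : ℝ) (x : Fin 3 → ℝ) :
    (!![a,0,0;0,b,0;0,0,c]).mulVec x = ![a * x 0, b * x 1, c * x 2] := by
  funext i
  fin_cases i <;> simp [Matrix.mulVec, dotProduct, Fin.sum_univ_three]

lemma ker_fst_r (p q : ℝ × (Fin 3 → ℝ)) :
    (Setoid.ker (Prod.fst : ℝ × (Fin 3 → ℝ) → ℝ)).r p q ↔ p.1 = q.1 := Iff.rfl

/-- Einstein simultaneity (equality of the time coordinate) is the unique
non-trivial equivalence relation on Minkowski spacetime which is invariant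
under the stabiliser of an inertial frame and whose classes meet every timelike
straight line in at most one point. -/
theorem einstein_simultaneity_unique :
    GoodSimRel (Setoid.ker (Prod.fst : ℝ × (Fin 3 → ℝ) → ℝ)) ∧
    (∀ S : Setoid (ℝ × (Fin 3 → ℝ)), GoodSimRel S →
      ∀ p q : ℝ × (Fin 3 → ℝ), S.r p q ↔ p.1 = q.1) := by
  constructor
  · refine ⟨?_, ?_, ?_, ?_⟩
    · intro b D hD a p q
      rw [ker_fst_r, ker_fst_r]
      show p.1 = q.1 ↔ p.1 + b = q.1 + b
      exact (add_left_inj b).symm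
    · refine ⟨(0, 0), (0, fun _ => 1), ?_, rfl⟩
      intro h
      have := congrFun (congrArg Prod.snd h) 0
      norm_num at this
    · refine ⟨(0, 0), (1, 0), ?_⟩
      rw [ker_fst_r]
      norm_num
    · intro base u hu s t hr
      rw [ker_fst_r] at hr
      have hsum : (0:ℝ) ≤ ∑ i, u.2 i ^ 2 := by positivity
      have hu1 : u.1 ≠ 0 := by
        intro h0
        rw [h0] at hu
        norm_num at hu
        linarith
      have hr' : s * u.1 = t * u.1 := by
        have : base.1 + s * u.1 = base.1 + t * u.1 := by simpa using hr
        linarith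
      exact mul_right_cancel₀ hu1 hr'
  · intro S hS p q
    obtain ⟨hinv, ⟨p0, q0, hne0, hr0⟩, ⟨pn, qn, hnr⟩, hline⟩ := hS
    -- Any two S-related events are simultaneous.
    have key1 : ∀ a b : ℝ × (Fin 3 → ℝ), S.r a b → a.1 = b.1 := by
      intro a b hab
      by_contra hT
      have hΔ : b.1 - a.1 ≠ 0 := sub_ne_zero.mpr fun h => hT h.symm
      -- one can move any point `c` by `(Δt, D (Δx))`
      have step : ∀ (D : Matrix (Fin 3) (Fin 3) ℝ),
          D ∈ Matrix.specialOrthogonalGroup (Fin 3) ℝ → ∀ c : ℝ × (Fin 3 → ℝ),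
          S.r c (c.1 + (b.1 - a.1), c.2 + D.mulVec (b.2 - a.2)) := by
        intro D hD c
        have h := (hinv (c.1 - a.1) D hD (c.2 - D.mulVec a.2) a b).mp hab
        have e1 : frameAct (c.1 - a.1) D (c.2 - D.mulVec a.2) a = c := by
          unfold frameAct
          rw [Prod.ext_iff]
          exact ⟨by dsimp; ring, by dsimp; abel⟩
        have e2 : frameAct (c.1 - a.1) D (c.2 - D.mulVec a.2) b
            = (c.1 + (b.1 - a.1), c.2 + D.mulVec (b.2 - a.2)) := by
          unfold frameAct
          rw [Prod.ext_iff]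
          refine ⟨by dsimp; ring, ?_⟩
          dsimp
          rw [Matrix.mulVec_sub]
          abel
        rw [e1, e2] at h
        exact h
      have hE1 := diagSign_mem 1 (-1) (-1) (by norm_num) (by norm_num) (by norm_num) (by norm_num)
      have hE2 := diagSign_mem (-1) 1 (-1) (by norm_num) (by norm_num) (by norm_num) (by norm_num)
      have hE3 := diagSign_mem (-1) (-1) 1 (by norm_num) (by norm_num) (by norm_num) (by norm_num)
      have r01 := step 1 one_mem_SO3 a
      have r12 := step _ hE1
        (a.1 + (b.1 - a.1), a.2 + (1 : Matrix (Fin 3) (Fin 3) ℝ).mulVec (b.2 - a.2))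
      have r23 := step _ hE2
        (a.1 + (b.1 - a.1) + (b.1 - a.1),
         a.2 + (1 : Matrix (Fin 3) (Fin 3) ℝ).mulVec (b.2 - a.2)
           + (!![1,0,0;0,-1,0;0,0,-1]).mulVec (b.2 - a.2))
      have r34 := step _ hE3
        (a.1 + (b.1 - a.1) + (b.1 - a.1) + (b.1 - a.1),
         a.2 + (1 : Matrix (Fin 3) (Fin 3) ℝ).mulVec (b.2 - a.2)
           + (!![1,0,0;0,-1,0;0,0,-1]).mulVec (b.2 - a.2)
           + (!![-1,0,0;0,1,0;0,0,-1]).mulVec (b.2 - a.2))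
      have rfinal := S.iseqv.trans (S.iseqv.trans (S.iseqv.trans r01 r12) r23) r34
      -- the endpoint is `a` shifted by a purely timelike vector
      have hpt : ((((a.1 + (b.1 - a.1)) + (b.1 - a.1)) + (b.1 - a.1)) + (b.1 - a.1),
          (((a.2 + (1 : Matrix (Fin 3) (Fin 3) ℝ).mulVec (b.2 - a.2))
            + (!![1,0,0;0,-1,0;0,0,-1]).mulVec (b.2 - a.2))
            + (!![-1,0,0;0,1,0;0,0,-1]).mulVec (b.2 - a.2))
            + (!![-1,0,0;0,-1,0;0,0,1]).mulVec (b.2 - a.2))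
          = a + (1:ℝ) • ((4 * (b.1 - a.1), (0 : Fin 3 → ℝ)) : ℝ × (Fin 3 → ℝ)) := by
        rw [Prod.ext_iff]
        constructor
        · simp; ring
        · show _ = a.2 + (1:ℝ) • (0 : Fin 3 → ℝ)
          rw [Matrix.one_mulVec, diagSign_mulVec, diagSign_mulVec, diagSign_mulVec]
          funext i
          fin_cases i <;>
            simp [Pi.add_apply, Pi.sub_apply, Matrix.vecHead, Matrix.vecTail] <;> ring
      rw [hpt] at rfinal
      have rfinal' : S.r
          (a + (0:ℝ) • ((4 * (b.1 - a.1), (0 : Fin 3 → ℝ)) : ℝ × (Fin 3 → ℝ)))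
          (a + (1:ℝ) • ((4 * (b.1 - a.1), (0 : Fin 3 → ℝ)) : ℝ × (Fin 3 → ℝ))) := by
        rw [show a + (0:ℝ) • ((4 * (b.1 - a.1), (0 : Fin 3 → ℝ)) : ℝ × (Fin 3 → ℝ)) = a by simp]
        exact rfinal
      have h4Δ : (4 * (b.1 - a.1)) ≠ 0 := by
        intro h; apply hΔ; linarith [h]
      have hu : (∑ i, ((0 : Fin 3 → ℝ)) i ^ 2)
          < ((4 * (b.1 - a.1), (0 : Fin 3 → ℝ)) : ℝ × (Fin 3 → ℝ)).1 ^ 2 := by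
        simp
        exact lt_of_le_of_ne (sq_nonneg _) (Ne.symm (pow_ne_zero 2 h4Δ))
      have := hline _ _ hu 0 1 rfinal'
      norm_num at this
    constructor
    · exact key1 p q
    · -- converse: simultaneous events are related
      intro hpq
      have hpq0 : p0.1 = q0.1 := key1 p0 q0 hr0
      have hd0 : q0.2 - p0.2 ≠ 0 := by
        intro h
        apply hne0
        rw [Prod.ext_iff]
        exact ⟨hpq0, by have := sub_eq_zero.mp h; exact this.symm⟩
      have hr2 : 0 < sq3 (q0.2 - p0.2) := sq3_pos hd0
      -- a step of length `‖d0‖` in any direction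
      have stepA : ∀ (t : ℝ) (x w : Fin 3 → ℝ), sq3 w = sq3 (q0.2 - p0.2) →
          S.r (t, x) (t, x + w) := by
        intro t x w hw
        obtain ⟨D, hD, hDw⟩ := rot_norm (q0.2 - p0.2) w hw.symm
        have h := (hinv (t - p0.1) D hD (x - D.mulVec p0.2) p0 q0).mp hr0
        have e1 : frameAct (t - p0.1) D (x - D.mulVec p0.2) p0 = (t, x) := by
          unfold frameAct
          rw [Prod.ext_iff]
          exact ⟨by dsimp; ring, by dsimp; abel⟩
        have e2 : frameAct (t - p0.1) D (x - D.mulVec p0.2) q0 = (t, x + w) := by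
          unfold frameAct
          rw [Prod.ext_iff]
          refine ⟨by dsimp; rw [hpq0]; ring, ?_⟩
          dsimp
          rw [← hDw, Matrix.mulVec_sub]
          abel
        rw [e1, e2] at h
        exact h
      -- a step of length at most `2‖d0‖` in any direction
      have stepB : ∀ (t : ℝ) (x v : Fin 3 → ℝ), sq3 v ≤ 4 * sq3 (q0.2 - p0.2) →
          S.r (t, x) (t, x + v) := by
        intro t x v hv
        obtain ⟨z, hz1, hz2⟩ := perp3_norm v (sq3 (q0.2 - p0.2) - sq3 v / 4) (by linarith)
        have hw1 : sq3 ((1/2 : ℝ) • v + z) = sq3 (q0.2 - p0.2) := by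
          simp only [sq3, dot3, Pi.add_apply, Pi.smul_apply, smul_eq_mul] at hz1 hz2 ⊢
          linear_combination hz1 + hz2
        have hw2 : sq3 ((1/2 : ℝ) • v - z) = sq3 (q0.2 - p0.2) := by
          simp only [sq3, dot3, Pi.sub_apply, Pi.smul_apply, smul_eq_mul] at hz1 hz2 ⊢
          linear_combination hz1 - hz2
        have h1 := stepA t x ((1/2 : ℝ) • v + z) hw1
        have h2 := stepA t (x + ((1/2 : ℝ) • v + z)) ((1/2 : ℝ) • v - z) hw2
        have hsum : x + ((1/2 : ℝ) • v + z) + ((1/2 : ℝ) • v - z) = x + v := by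
          funext i
          simp only [Pi.add_apply, Pi.sub_apply, Pi.smul_apply, smul_eq_mul]
          ring
        rw [hsum] at h2
        exact S.iseqv.trans h1 h2
      -- arbitrary purely spatial displacements
      have stepC : ∀ (t : ℝ) (x v : Fin 3 → ℝ), S.r (t, x) (t, x + v) := by
        intro t x v
        obtain ⟨n, hn⟩ := exists_nat_ge (sq3 v / (4 * sq3 (q0.2 - p0.2)))
        set N : ℕ := n + 1 with hN
        have hNpos : (0:ℝ) < N := by positivity
        have hsmall : sq3 ((1 / (N:ℝ)) • v) ≤ 4 * sq3 (q0.2 - p0.2) := by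
          have hsq : sq3 ((1 / (N:ℝ)) • v) = (1 / (N:ℝ))^2 * sq3 v := by
            simp [sq3, Pi.smul_apply, smul_eq_mul]; ring
          rw [hsq]
          have h1 : sq3 v ≤ (n:ℝ) * (4 * sq3 (q0.2 - p0.2)) := by
            rw [div_le_iff₀ (by positivity)] at hn
            linarith
          have h2 : (n:ℝ) ≤ (N:ℝ)^2 := by
            have : (n:ℝ) + 1 ≤ ((n:ℝ)+1)^2 := by nlinarith [Nat.cast_nonneg (α := ℝ) n]
            have hNn : ((N:ℕ):ℝ) = (n:ℝ) + 1 := by rw [hN]; push_cast; ring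
            rw [hNn]
            linarith
          rw [div_pow, one_pow, div_mul_eq_mul_div, one_mul, div_le_iff₀ (by positivity)]
          nlinarith [hr2]
        have key : ∀ k : ℕ, S.r (t, x) (t, x + (k : ℝ) • ((1 / (N:ℝ)) • v)) := by
          intro k
          induction k with
          | zero => simpa using S.iseqv.refl (t, x)
          | succ m ih =>
            have h := stepB t (x + (m : ℝ) • ((1 / (N:ℝ)) • v)) ((1 / (N:ℝ)) • v) hsmall
            have : x + (m : ℝ) • ((1 / (N:ℝ)) • v) + (1 / (N:ℝ)) • v
                = x + ((m+1 : ℕ) : ℝ) • ((1 / (N:ℝ)) • v) := by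
              funext i
              simp only [Pi.add_apply, Pi.smul_apply, smul_eq_mul]
              push_cast
              ring
            rw [this] at h
            exact S.iseqv.trans ih h
        have hfin := key N
        have : x + (N : ℝ) • ((1 / (N:ℝ)) • v) = x + v := by
          rw [smul_smul, mul_one_div, div_self hNpos.ne', one_smul]
        rw [this] at hfin
        exact hfin
      -- conclude
      have : q = (p.1, p.2 + (q.2 - p.2)) := by
        rw [Prod.ext_iff]
        exact ⟨hpq.symm, by dsimp; abel⟩
      rw [this]
      have : p = (p.1, p.2) := rfl
      rw [this]
      exact stepC p.1 p.2 (q.2 - p.2)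
end
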